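/- arXiv:2203.04953 — 7 statements merged into one kernel-verified Lean document; each statement's English description precedes it below -/
import Mathlib

section
/- If G is a disconnected finite simple graph, then G is a minimal unipolar obstruction if and only if G is isomorphic to 2P_3 (the disjoint union of two paths on three vertices). -/
open SimpleGraph

universe u v

/-! ### Basic predicates -/

/-- `B` induces a disjoint union of complete graphs in `G` (i.e. `G[B]` is a cluster). -/
def IsClusterSet {V : Type*} (G : SimpleGraph V) (B : Set V) : Prop :=
  ∀ ⦃u w x : V⦄, u ∈ B → w ∈ B → x ∈ B → G.Adj u w → G.Adj w x → u ≠ x → G.Adj u x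

/-- `A` induces a complete multipartite graph in `G`
(the complement of `G[A]` is a disjoint union of cliques). -/
def IsCompleteMultipartiteSet {V : Type*} (G : SimpleGraph V) (A : Set V) : Prop :=
  ∀ ⦃u w x : V⦄, u ∈ A → w ∈ A → x ∈ A → u ≠ w → w ≠ x → u ≠ x →
    ¬ G.Adj u w → ¬ G.Adj w x → ¬ G.Adj u x

/-- `A` is an independent set of `G`. -/
def IsIndepSet {V : Type*} (G : SimpleGraph V) (A : Set V) : Prop :=
  ∀ ⦃u w : V⦄, u ∈ A → w ∈ A → ¬ G.Adj u w

/-- `G[B]` is a disjoint union of at most `k` complete graphs. -/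
def IsClusterSetLE {V : Type*} (G : SimpleGraph V) (k : ℕ) (B : Set V) : Prop :=
  ∃ g : B → Fin k, ∀ u w : B, u ≠ w → (G.Adj u w ↔ g u = g w)

/-- `G[A]` is a complete multipartite graph with at most `s` parts. -/
def IsCompleteMultipartiteSetLE {V : Type*} (G : SimpleGraph V) (s : ℕ) (A : Set V) : Prop :=
  ∃ f : A → Fin s, ∀ u w : A, G.Adj u w ↔ f u ≠ f w

/-! ### Polarity properties -/

/-- `G` is unipolar: a partition `(A, Aᶜ)` with `A` a clique and `G[Aᶜ]` a cluster. -/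
def Unipolar {V : Type*} (G : SimpleGraph V) : Prop :=
  ∃ A : Set V, G.IsClique A ∧ IsClusterSet G Aᶜ

/-- `G` is monopolar ((1,∞)-polar). -/
def Monopolar {V : Type*} (G : SimpleGraph V) : Prop :=
  ∃ A : Set V, _root_.IsIndepSet G A ∧ IsClusterSet G Aᶜ

/-- `G` is polar ((∞,∞)-polar). -/
def Polar {V : Type*} (G : SimpleGraph V) : Prop :=
  ∃ A : Set V, IsCompleteMultipartiteSet G A ∧ IsClusterSet G Aᶜ

/-- `G` is (s,1)-polar. -/
def SOnePolar {V : Type*} (s : ℕ) (G : SimpleGraph V) : Prop :=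
  ∃ A : Set V, IsCompleteMultipartiteSetLE G s A ∧ G.IsClique Aᶜ

/-- `G` is (∞,1)-polar. -/
def InfOnePolar {V : Type*} (G : SimpleGraph V) : Prop :=
  ∃ A : Set V, IsCompleteMultipartiteSet G A ∧ G.IsClique Aᶜ

/-- `G` is (1,k)-polar. -/
def OneKPolar {V : Type*} (k : ℕ) (G : SimpleGraph V) : Prop :=
  ∃ A : Set V, _root_.IsIndepSet G A ∧ IsClusterSetLE G k Aᶜ

/-! ### Minimal obstructions -/

def MinUnipolarObstruction {V : Type*} (G : SimpleGraph V) : Prop :=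
  ¬ Unipolar G ∧ ∀ s : Set V, s ≠ Set.univ → Unipolar (G.induce s)

def MinMonopolarObstruction {V : Type*} (G : SimpleGraph V) : Prop :=
  ¬ Monopolar G ∧ ∀ s : Set V, s ≠ Set.univ → Monopolar (G.induce s)

def MinPolarObstruction {V : Type*} (G : SimpleGraph V) : Prop :=
  ¬ Polar G ∧ ∀ s : Set V, s ≠ Set.univ → Polar (G.induce s)

def MinSOnePolarObstruction {V : Type*} (s : ℕ) (G : SimpleGraph V) : Prop :=
  ¬ SOnePolar s G ∧ ∀ t : Set V, t ≠ Set.univ → SOnePolar s (G.induce t)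

def MinInfOnePolarObstruction {V : Type*} (G : SimpleGraph V) : Prop :=
  ¬ InfOnePolar G ∧ ∀ t : Set V, t ≠ Set.univ → InfOnePolar (G.induce t)

def MinOneKPolarObstruction {V : Type*} (k : ℕ) (G : SimpleGraph V) : Prop :=
  ¬ OneKPolar k G ∧ ∀ t : Set V, t ≠ Set.univ → OneKPolar k (G.induce t)

/-! ### Graph constructions -/

/-- The join of two graphs: all edges added between the summands. -/
def joinG {α β : Type*} (G : SimpleGraph α) (H : SimpleGraph β) : SimpleGraph (α ⊕ β) where
  Adj x y := (G ⊕g H).Adj x y ∨ (x.isLeft ∧ y.isRight) ∨ (x.isRight ∧ y.isLeft)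
  symm := ⟨fun x y h => by
    rcases h with h | ⟨h1, h2⟩ | ⟨h1, h2⟩
    · exact Or.inl ((G ⊕g H).symm.symm _ _ h)
    · exact Or.inr (Or.inr ⟨h2, h1⟩)
    · exact Or.inr (Or.inl ⟨h2, h1⟩)⟩
  loopless := ⟨fun x h => by
    rcases h with h | ⟨h1, h2⟩ | ⟨h1, h2⟩
    · exact (G ⊕g H).loopless.irrefl x h
    · cases x <;> simp_all
    · cases x <;> simp_all⟩

/-- `K_n`, the complete graph on `n` vertices. -/
def KG (n : ℕ) : SimpleGraph (Fin n) := ⊤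

/-- `n K_1`, the edgeless graph on `n` vertices. -/
def EG (n : ℕ) : SimpleGraph (Fin n) := ⊥

/-- The banner graph `P`: a four-cycle `0 1 2 3` with a pendant vertex `4` adjacent to `0`. -/
def banner : SimpleGraph (Fin 5) :=
  SimpleGraph.fromEdgeSet {s(0, 1), s(1, 2), s(2, 3), s(3, 0), s(0, 4)}

/-- The chair (fork) graph `F`: a path `0 1 2 3` with an extra vertex `4` adjacent to `1`. -/
def chair : SimpleGraph (Fin 5) :=
  SimpleGraph.fromEdgeSet {s(0, 1), s(1, 2), s(2, 3), s(1, 4)}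

/-- `2P_3`. -/
def twoP3 : SimpleGraph (Fin 3 ⊕ Fin 3) := pathGraph 3 ⊕g pathGraph 3

/-- `K_{2,3}`. -/
def K23 : SimpleGraph (Fin 2 ⊕ Fin 3) := completeBipartiteGraph (Fin 2) (Fin 3)

/-- The seven graphs `E1, E2, E3, E7, E10, E11, E12`. -/
def E1 : SimpleGraph (Fin 1 ⊕ (Fin 2 ⊕ Fin 2)) := KG 1 ⊕g (KG 2 ⊕g KG 2)
def E2 : SimpleGraph (Fin 3 ⊕ Fin 3) := pathGraph 3 ⊕g pathGraph 3
def E3 : SimpleGraph (Fin 4 ⊕ Fin 2) := cycleGraph 4 ⊕g EG 2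
def E7 : SimpleGraph (Fin 1 ⊕ (Fin 3 ⊕ Fin 2)) := KG 1 ⊕g (pathGraph 3 ⊕g KG 2)ᶜ
def E10 : SimpleGraph (Fin 1 ⊕ Fin 5) := KG 1 ⊕g cycleGraph 5
def E11 : SimpleGraph (Fin 1 ⊕ Fin 5) := KG 1 ⊕g banner
def E12 : SimpleGraph (Fin 1 ⊕ Fin 5) := KG 1 ⊕g (pathGraph 5)ᶜ

/-! ### P4 structure -/

/-- `W` induces a path on four vertices in `G`. -/
def InducesP4 {V : Type*} (G : SimpleGraph V) (W : Set V) : Prop :=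
  Nonempty (G.induce W ≃g pathGraph 4)

/-- A graph is a cograph if it has no induced `P_4`. -/
def Cograph {V : Type*} (G : SimpleGraph V) : Prop :=
  ∀ W : Set V, ¬ InducesP4 G W

/-- `G` is `P_4`-sparse: any five vertices induce at most one `P_4`. -/
def P4Sparse {V : Type*} (G : SimpleGraph V) : Prop :=
  ∀ s : Set V, s.ncard = 5 → ∀ W₁ W₂ : Set V, W₁ ⊆ s → W₂ ⊆ s →
    InducesP4 G W₁ → InducesP4 G W₂ → W₁ = W₂

/-- `G` is `P_4`-extendible. -/
def P4Extendible {V : Type*} (G : SimpleGraph V) : Prop :=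
  ∀ W : Set V, InducesP4 G W →
    ∀ v₁ v₂ : V, v₁ ∉ W → v₂ ∉ W →
      (∃ W₁ : Set V, InducesP4 G W₁ ∧ v₁ ∈ W₁ ∧ (W₁ ∩ W).Nonempty) →
      (∃ W₂ : Set V, InducesP4 G W₂ ∧ v₂ ∈ W₂ ∧ (W₂ ∩ W).Nonempty) → v₁ = v₂

/-! ### Spiders -/

/-- `(S, K, R)` is a spider partition of `G`. -/
def IsSpiderPartition {V : Type*} (G : SimpleGraph V) (S K R : Set V) : Prop :=
  S ∪ K ∪ R = Set.univ ∧ Disjoint S K ∧ Disjoint S R ∧ Disjoint K R ∧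
  S.ncard = K.ncard ∧ 2 ≤ K.ncard ∧
  G.IsClique K ∧ _root_.IsIndepSet G S ∧
  (∃ f : S → K, Function.Bijective f ∧
    ((∀ s : S, ∀ k : K, G.Adj s k ↔ (f s : V) = k) ∨
     (∀ s : S, ∀ k : K, G.Adj s k ↔ (f s : V) ≠ k))) ∧
  (∀ r ∈ R, ∀ k ∈ K, G.Adj r k) ∧
  (∀ r ∈ R, ∀ s ∈ S, ¬ G.Adj r s)

/-- `G` is a `B`-spider with partition `(S, K, R)`, where `B` is a fixed base graph with
midpoint set `M` and endpoint set `E`: `G` is obtained from a copy of `B` (whose midpoints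
form `K` and whose endpoints form `S`) by adding the set `R` of vertices, each adjacent to
all midpoints and to no endpoint. -/
def IsBaseSpider {n : ℕ} {V : Type*} (B : SimpleGraph (Fin n)) (M E : Set (Fin n))
    (G : SimpleGraph V) (S K R : Set V) : Prop :=
  ∃ f : Fin n → V, Function.Injective f ∧
    (∀ i j : Fin n, G.Adj (f i) (f j) ↔ B.Adj i j) ∧
    K = f '' M ∧ S = f '' E ∧ R = (Set.range f)ᶜ ∧
    (∀ r ∈ R, ∀ x ∈ K, G.Adj r x) ∧
    (∀ r ∈ R, ∀ x ∈ S, ¬ G.Adj r x)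


/-! ### Auxiliary lemmas for stmt_0 -/

lemma twoP3_adj' (u v : Fin 3 ⊕ Fin 3) : twoP3.Adj u v ↔
    (∃ i j : Fin 3, u = Sum.inl i ∧ v = Sum.inl j ∧ (i.val+1 = j.val ∨ j.val+1 = i.val)) ∨
    (∃ i j : Fin 3, u = Sum.inr i ∧ v = Sum.inr j ∧ (i.val+1 = j.val ∨ j.val+1 = i.val)) := by
  cases u <;> cases v <;> simp [twoP3, pathGraph_adj]

instance : DecidableRel twoP3.Adj := fun u v => decidable_of_iff' _ (twoP3_adj' u v)

lemma key1 : ∀ (k : Fin 3) (a b c : Fin 3 ⊕ Fin 3),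
    a ≠ Sum.inl k → b ≠ Sum.inl k → c ≠ Sum.inl k →
    a ≠ Sum.inr 1 → b ≠ Sum.inr 1 → c ≠ Sum.inr 1 →
    twoP3.Adj a b → twoP3.Adj b c → a ≠ c → twoP3.Adj a c := by decide

lemma key2 : ∀ (k : Fin 3) (a b c : Fin 3 ⊕ Fin 3),
    a ≠ Sum.inr k → b ≠ Sum.inr k → c ≠ Sum.inr k →
    a ≠ Sum.inl 1 → b ≠ Sum.inl 1 → c ≠ Sum.inl 1 →
    twoP3.Adj a b → twoP3.Adj b c → a ≠ c → twoP3.Adj a c := by decide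

lemma aux_not_unipolar {V : Type*} (G : SimpleGraph V) (a1 a2 a3 b1 b2 b3 : V)
    (h12 : G.Adj a1 a2) (h23 : G.Adj a2 a3) (h13 : ¬ G.Adj a1 a3) (hne : a1 ≠ a3)
    (k12 : G.Adj b1 b2) (k23 : G.Adj b2 b3) (k13 : ¬ G.Adj b1 b3) (kne : b1 ≠ b3)
    (cross : ∀ i j, (i = a1 ∨ i = a2 ∨ i = a3) → (j = b1 ∨ j = b2 ∨ j = b3) →
      i ≠ j ∧ ¬ G.Adj i j) :
    ¬ Unipolar G := by
  rintro ⟨A, hA, hB⟩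
  by_cases ha : a1 ∈ A ∨ a2 ∈ A ∨ a3 ∈ A
  · by_cases hb : b1 ∈ A ∨ b2 ∈ A ∨ b3 ∈ A
    · obtain ⟨i, hi, hiA⟩ : ∃ i, (i = a1 ∨ i = a2 ∨ i = a3) ∧ i ∈ A := by
        rcases ha with h | h | h
        exacts [⟨a1, Or.inl rfl, h⟩, ⟨a2, Or.inr (Or.inl rfl), h⟩, ⟨a3, Or.inr (Or.inr rfl), h⟩]
      obtain ⟨j, hj, hjA⟩ : ∃ j, (j = b1 ∨ j = b2 ∨ j = b3) ∧ j ∈ A := by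
        rcases hb with h | h | h
        exacts [⟨b1, Or.inl rfl, h⟩, ⟨b2, Or.inr (Or.inl rfl), h⟩, ⟨b3, Or.inr (Or.inr rfl), h⟩]
      exact (cross i j hi hj).2 (hA hiA hjA (cross i j hi hj).1)
    · push_neg at hb
      exact k13 (hB hb.1 hb.2.1 hb.2.2 k12 k23 kne)
  · push_neg at ha
    exact h13 (hB ha.1 ha.2.1 ha.2.2 h12 h23 hne)

/-- Helper: the map sending the six elements of `Fin 3 ⊕ Fin 3` to six given vertices. -/
def sixFun {V : Type*} (x1 x2 x3 y1 y2 y3 : V) : Fin 3 ⊕ Fin 3 → V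
  | Sum.inl 0 => x1
  | Sum.inl 1 => x2
  | Sum.inl 2 => x3
  | Sum.inr 0 => y1
  | Sum.inr 1 => y2
  | Sum.inr 2 => y3

set_option maxHeartbeats 1000000 in
lemma aux_build_iso {V : Type*} (G : SimpleGraph V) (x1 x2 x3 y1 y2 y3 : V)
    (h12 : G.Adj x1 x2) (h23 : G.Adj x2 x3) (h13 : ¬ G.Adj x1 x3) (hne : x1 ≠ x3)
    (k12 : G.Adj y1 y2) (k23 : G.Adj y2 y3) (k13 : ¬ G.Adj y1 y3) (kne : y1 ≠ y3)
    (hcross : ∀ i j, (i = x1 ∨ i = x2 ∨ i = x3) → (j = y1 ∨ j = y2 ∨ j = y3) →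
      i ≠ j ∧ ¬ G.Adj i j)
    (hall : ∀ v : V, v = x1 ∨ v = x2 ∨ v = x3 ∨ v = y1 ∨ v = y2 ∨ v = y3) :
    Nonempty (G ≃g twoP3) := by
  have nadj : ∀ i j, (i = x1 ∨ i = x2 ∨ i = x3) → (j = y1 ∨ j = y2 ∨ j = y3) →
      ¬ G.Adj i j := fun i j hi hj => (hcross i j hi hj).2
  have hnex : ∀ i j, (i = x1 ∨ i = x2 ∨ i = x3) → (j = y1 ∨ j = y2 ∨ j = y3) →
      i ≠ j := fun i j hi hj => (hcross i j hi hj).1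
  have hinj : Function.Injective (sixFun x1 x2 x3 y1 y2 y3) := by
    have d12 : x1 ≠ x2 := h12.ne
    have d23 : x2 ≠ x3 := h23.ne
    have e12 : y1 ≠ y2 := k12.ne
    have e23 : y2 ≠ y3 := k23.ne
    rintro (i | i) (j | j) hij <;> fin_cases i <;> fin_cases j <;>
      first
      | rfl
      | exact absurd hij d12 | exact absurd hij.symm d12
      | exact absurd hij d23 | exact absurd hij.symm d23
      | exact absurd hij hne | exact absurd hij.symm hne
      | exact absurd hij e12 | exact absurd hij.symm e12
      | exact absurd hij e23 | exact absurd hij.symm e23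
      | exact absurd hij kne | exact absurd hij.symm kne
      | exact absurd hij.symm (hnex _ _
          (by first | exact Or.inl rfl | exact Or.inr (Or.inl rfl) | exact Or.inr (Or.inr rfl))
          (by first | exact Or.inl rfl | exact Or.inr (Or.inl rfl) | exact Or.inr (Or.inr rfl)))
      | exact absurd hij (hnex _ _
          (by first | exact Or.inl rfl | exact Or.inr (Or.inl rfl) | exact Or.inr (Or.inr rfl))
          (by first | exact Or.inl rfl | exact Or.inr (Or.inl rfl) | exact Or.inr (Or.inr rfl)))
  have hsurj : Function.Surjective (sixFun x1 x2 x3 y1 y2 y3) := by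
    intro v
    rcases hall v with rfl | rfl | rfl | rfl | rfl | rfl
    exacts [⟨Sum.inl 0, rfl⟩, ⟨Sum.inl 1, rfl⟩, ⟨Sum.inl 2, rfl⟩,
      ⟨Sum.inr 0, rfl⟩, ⟨Sum.inr 1, rfl⟩, ⟨Sum.inr 2, rfl⟩]
  have hmap : ∀ a b, G.Adj (sixFun x1 x2 x3 y1 y2 y3 a)
      (sixFun x1 x2 x3 y1 y2 y3 b) ↔ twoP3.Adj a b := by
    rintro (i | i) (j | j) <;> fin_cases i <;> fin_cases j <;>
      first
      | exact iff_of_false (G.loopless.irrefl _) (by decide)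
      | exact iff_of_true h12 (by decide) | exact iff_of_true h12.symm (by decide)
      | exact iff_of_true h23 (by decide) | exact iff_of_true h23.symm (by decide)
      | exact iff_of_true k12 (by decide) | exact iff_of_true k12.symm (by decide)
      | exact iff_of_true k23 (by decide) | exact iff_of_true k23.symm (by decide)
      | exact iff_of_false h13 (by decide)
      | exact iff_of_false (fun h => h13 h.symm) (by decide)
      | exact iff_of_false k13 (by decide)
      | exact iff_of_false (fun h => k13 h.symm) (by decide)
      | exact iff_of_false (nadj _ _
          (by first | exact Or.inl rfl | exact Or.inr (Or.inl rfl) | exact Or.inr (Or.inr rfl))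
          (by first | exact Or.inl rfl | exact Or.inr (Or.inl rfl) | exact Or.inr (Or.inr rfl)))
          (by decide)
      | exact iff_of_false (fun h => nadj _ _
          (by first | exact Or.inl rfl | exact Or.inr (Or.inl rfl) | exact Or.inr (Or.inr rfl))
          (by first | exact Or.inl rfl | exact Or.inr (Or.inl rfl) | exact Or.inr (Or.inr rfl))
          h.symm) (by decide)
  exact ⟨(⟨Equiv.ofBijective _ ⟨hinj, hsurj⟩, fun {a b} => hmap a b⟩ : twoP3 ≃g G).symm⟩

set_option maxHeartbeats 800000 in
/-- If `G` is a disconnected finite simple graph, then `G` is a minimal unipolar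
obstruction if and only if `G` is isomorphic to `2P_3`. -/
theorem stmt_0 {V : Type*} [Fintype V] (G : SimpleGraph V) (hG : ¬ G.Preconnected) :
    MinUnipolarObstruction G ↔ Nonempty (G ≃g twoP3) := by
  classical
  constructor
  · rintro ⟨hnot, hmin⟩
    by_cases hsep : ∃ x1 x2 x3 y1 y2 y3 : V, G.Adj x1 x2 ∧ G.Adj x2 x3 ∧ ¬ G.Adj x1 x3 ∧
        x1 ≠ x3 ∧ G.Adj y1 y2 ∧ G.Adj y2 y3 ∧ ¬ G.Adj y1 y3 ∧ y1 ≠ y3 ∧ ¬ G.Reachable x2 y2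
    · obtain ⟨x1, x2, x3, y1, y2, y3, h12, h23, h13, hne, k12, k23, k13, kne, hxy⟩ := hsep
      have hRx : ∀ i, (i = x1 ∨ i = x2 ∨ i = x3) → G.Reachable x2 i := by
        rintro i (rfl | rfl | rfl)
        exacts [h12.reachable.symm, SimpleGraph.Reachable.refl _, h23.reachable]
      have hRy : ∀ j, (j = y1 ∨ j = y2 ∨ j = y3) → G.Reachable y2 j := by
        rintro j (rfl | rfl | rfl)
        exacts [k12.reachable.symm, SimpleGraph.Reachable.refl _, k23.reachable]
      have hcross : ∀ i j, (i = x1 ∨ i = x2 ∨ i = x3) → (j = y1 ∨ j = y2 ∨ j = y3) →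
          i ≠ j ∧ ¬ G.Adj i j := by
        intro i j hi hj
        have r1 := hRx i hi
        have r2 := hRy j hj
        constructor
        · rintro rfl
          exact hxy (r1.trans r2.symm)
        · intro hadj
          exact hxy ((r1.trans hadj.reachable).trans r2.symm)
      set W : Set V := {v | v = x1 ∨ v = x2 ∨ v = x3 ∨ v = y1 ∨ v = y2 ∨ v = y3} with hWdef
      have mx1 : x1 ∈ W := Or.inl rfl
      have mx2 : x2 ∈ W := Or.inr (Or.inl rfl)
      have mx3 : x3 ∈ W := Or.inr (Or.inr (Or.inl rfl))
      have my1 : y1 ∈ W := Or.inr (Or.inr (Or.inr (Or.inl rfl)))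
      have my2 : y2 ∈ W := Or.inr (Or.inr (Or.inr (Or.inr (Or.inl rfl))))
      have my3 : y3 ∈ W := Or.inr (Or.inr (Or.inr (Or.inr (Or.inr rfl))))
      have hWuniv : W = Set.univ := by
        by_contra hW
        apply aux_not_unipolar (G.induce W) ⟨x1, mx1⟩ ⟨x2, mx2⟩ ⟨x3, mx3⟩
          ⟨y1, my1⟩ ⟨y2, my2⟩ ⟨y3, my3⟩ h12 h23 h13
          (fun h => hne (congrArg Subtype.val h)) k12 k23 k13
          (fun h => kne (congrArg Subtype.val h)) ?_ (hmin W hW)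
        intro i j hi hj
        have hi' : (i : V) = x1 ∨ (i : V) = x2 ∨ (i : V) = x3 := by
          rcases hi with rfl | rfl | rfl
          exacts [Or.inl rfl, Or.inr (Or.inl rfl), Or.inr (Or.inr rfl)]
        have hj' : (j : V) = y1 ∨ (j : V) = y2 ∨ (j : V) = y3 := by
          rcases hj with rfl | rfl | rfl
          exacts [Or.inl rfl, Or.inr (Or.inl rfl), Or.inr (Or.inr rfl)]
        obtain ⟨hne', hnadj'⟩ := hcross _ _ hi' hj'
        exact ⟨fun h => hne' (congrArg Subtype.val h), fun h => hnadj' h⟩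
      have hall : ∀ v : V, v = x1 ∨ v = x2 ∨ v = x3 ∨ v = y1 ∨ v = y2 ∨ v = y3 :=
        fun v => Set.eq_univ_iff_forall.mp hWuniv v
      exact aux_build_iso G x1 x2 x3 y1 y2 y3 h12 h23 h13 hne k12 k23 k13 kne hcross hall
    · exfalso
      apply hnot
      by_cases hp3 : ∃ a b c : V, G.Adj a b ∧ G.Adj b c ∧ ¬ G.Adj a c ∧ a ≠ c
      · obtain ⟨a, b, c, hab, hbc, hac, hane⟩ := hp3
        have hCne : ({v | G.Reachable b v} : Set V) ≠ Set.univ := by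
          intro h
          apply hG
          intro u v
          have hu : u ∈ ({v | G.Reachable b v} : Set V) := h ▸ Set.mem_univ u
          have hv : v ∈ ({v | G.Reachable b v} : Set V) := h ▸ Set.mem_univ v
          exact hu.symm.trans hv
        obtain ⟨A, hA, hB⟩ := hmin _ hCne
        refine ⟨Subtype.val '' A, ?_, ?_⟩
        · rintro u ⟨u0, hu0, rfl⟩ w ⟨w0, hw0, rfl⟩ hnuw
          exact hA hu0 hw0 (fun h => hnuw (congrArg Subtype.val h))
        · intro u w x hu hw hx huw hwx hux
          by_cases hwC : w ∈ ({v | G.Reachable b v} : Set V)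
          · have huC : u ∈ ({v | G.Reachable b v} : Set V) := hwC.trans huw.reachable.symm
            have hxC : x ∈ ({v | G.Reachable b v} : Set V) := hwC.trans hwx.reachable
            have hu' : (⟨u, huC⟩ : {v | G.Reachable b v}) ∉ A := fun h => hu ⟨_, h, rfl⟩
            have hw' : (⟨w, hwC⟩ : {v | G.Reachable b v}) ∉ A := fun h => hw ⟨_, h, rfl⟩
            have hx' : (⟨x, hxC⟩ : {v | G.Reachable b v}) ∉ A := fun h => hx ⟨_, h, rfl⟩
            exact hB hu' hw' hx' huw hwx (fun h => hux (congrArg Subtype.val h))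
          · by_contra hnadj
            exact hwC (by
              by_contra hr
              exact hsep ⟨a, b, c, u, w, x, hab, hbc, hac, hane, huw, hwx, hnadj, hux, hr⟩)
      · refine ⟨∅, G.isClique_empty, ?_⟩
        intro u w x _ _ _ huw hwx hux
        by_contra h
        exact hp3 ⟨u, w, x, huw, hwx, h, hux⟩
  · rintro ⟨e⟩
    constructor
    · apply aux_not_unipolar G (e.symm (Sum.inl 0)) (e.symm (Sum.inl 1)) (e.symm (Sum.inl 2))
        (e.symm (Sum.inr 0)) (e.symm (Sum.inr 1)) (e.symm (Sum.inr 2))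
      · exact e.symm.map_rel_iff.mpr (by decide)
      · exact e.symm.map_rel_iff.mpr (by decide)
      · exact fun h => (by decide : ¬ twoP3.Adj (Sum.inl 0) (Sum.inl 2))
          (e.symm.map_rel_iff.mp h)
      · exact fun h => (by decide : (Sum.inl 0 : Fin 3 ⊕ Fin 3) ≠ Sum.inl 2)
          (e.symm.toEquiv.injective h)
      · exact e.symm.map_rel_iff.mpr (by decide)
      · exact e.symm.map_rel_iff.mpr (by decide)
      · exact fun h => (by decide : ¬ twoP3.Adj (Sum.inr 0) (Sum.inr 2))
          (e.symm.map_rel_iff.mp h)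
      · exact fun h => (by decide : (Sum.inr 0 : Fin 3 ⊕ Fin 3) ≠ Sum.inr 2)
          (e.symm.toEquiv.injective h)
      · intro i j hi hj
        obtain ⟨a, rfl⟩ : ∃ a : Fin 3, i = e.symm (Sum.inl a) := by
          rcases hi with rfl | rfl | rfl
          exacts [⟨0, rfl⟩, ⟨1, rfl⟩, ⟨2, rfl⟩]
        obtain ⟨b, rfl⟩ : ∃ b : Fin 3, j = e.symm (Sum.inr b) := by
          rcases hj with rfl | rfl | rfl
          exacts [⟨0, rfl⟩, ⟨1, rfl⟩, ⟨2, rfl⟩]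
        constructor
        · intro h
          exact absurd (e.symm.toEquiv.injective h) (by simp)
        · intro h
          exact absurd (e.symm.map_rel_iff.mp h) (by simp [twoP3_adj'])
    · intro s hs
      obtain ⟨v, hv⟩ := (Set.ne_univ_iff_exists_notMem s).mp hs
      have hmem : ∀ u : s, e ↑u ≠ e v := fun u h => hv (e.toEquiv.injective h ▸ u.2)
      rcases hev : e v with k | k
      · refine ⟨{u : s | e ↑u = Sum.inr 1}, ?_, ?_⟩
        · intro u hu w hw hnuw
          exact absurd (Subtype.ext (e.toEquiv.injective (hu.trans hw.symm))) hnuw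
        · intro u w x hu hw hx huw hwx hux
          have h1 : e ↑u ≠ Sum.inl k := fun h => hmem u (h.trans hev.symm)
          have h2 : e ↑w ≠ Sum.inl k := fun h => hmem w (h.trans hev.symm)
          have h3 : e ↑x ≠ Sum.inl k := fun h => hmem x (h.trans hev.symm)
          exact e.map_rel_iff.mp (key1 k (e ↑u) (e ↑w) (e ↑x) h1 h2 h3 hu hw hx
            (e.map_rel_iff.mpr huw) (e.map_rel_iff.mpr hwx)
            (fun h => hux (Subtype.ext (e.toEquiv.injective h))))
      · refine ⟨{u : s | e ↑u = Sum.inl 1}, ?_, ?_⟩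
        · intro u hu w hw hnuw
          exact absurd (Subtype.ext (e.toEquiv.injective (hu.trans hw.symm))) hnuw
        · intro u w x hu hw hx huw hwx hux
          have h1 : e ↑u ≠ Sum.inr k := fun h => hmem u (h.trans hev.symm)
          have h2 : e ↑w ≠ Sum.inr k := fun h => hmem w (h.trans hev.symm)
          have h3 : e ↑x ≠ Sum.inr k := fun h => hmem x (h.trans hev.symm)
          exact e.map_rel_iff.mp (key2 k (e ↑u) (e ↑w) (e ↑x) h1 h2 h3 hu hw hx
            (e.map_rel_iff.mpr huw) (e.map_rel_iff.mpr hwx)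
            (fun h => hux (Subtype.ext (e.toEquiv.injective h))))
end

section
/- Let G be a finite simple graph whose complement is disconnected. Then G is a minimal unipolar obstruction if and only if G is isomorphic to the complete bipartite graph K_{2,3}. -/
open SimpleGraph

universe u v

/-! ### Auxiliary development -/

section Aux

variable {V : Type u} {W : Type v} {G : SimpleGraph V} {H : SimpleGraph W}

/-- `s` can be partitioned into two cliques. -/
def CoBip (G : SimpleGraph V) (s : Set V) : Prop :=
  ∃ A : Set V, A ⊆ s ∧ G.IsClique A ∧ G.IsClique (s \ A)

/-- Unipolar partition within the set `s`. -/
def UOn (G : SimpleGraph V) (s : Set V) : Prop :=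
  ∃ A : Set V, A ⊆ s ∧ G.IsClique A ∧ IsClusterSet G (s \ A)

lemma isClusterSet_of_isClique {s : Set V} (h : G.IsClique s) : IsClusterSet G s :=
  fun _ _ _ hu _ hx _ _ hne => h hu hx hne

lemma coBip_of_clique {s : Set V} (h : G.IsClique s) : CoBip G s :=
  ⟨s, le_refl _, h, by simp⟩

lemma CoBip.mono {s t : Set V} (hst : s ⊆ t) (h : CoBip G t) : CoBip G s := by
  obtain ⟨A, hA, h1, h2⟩ := h
  refine ⟨A ∩ s, Set.inter_subset_right, h1.subset Set.inter_subset_left, h2.subset ?_⟩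
  intro x hx
  exact ⟨hst hx.1, fun hxA => hx.2 ⟨hxA, hx.1⟩⟩

lemma unipolar_iff_uOn_univ : Unipolar G ↔ UOn G Set.univ := by
  constructor
  · rintro ⟨A, h1, h2⟩
    exact ⟨A, Set.subset_univ _, h1, by rwa [← Set.compl_eq_univ_diff]⟩
  · rintro ⟨A, _, h1, h2⟩
    exact ⟨A, h1, by rwa [Set.compl_eq_univ_diff]⟩

lemma unipolar_induce_iff (s : Set V) : Unipolar (G.induce s) ↔ UOn G s := by
  constructor
  · rintro ⟨A, h1, h2⟩
    refine ⟨Subtype.val '' A, ?_, ?_, ?_⟩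
    · rintro x ⟨y, _, rfl⟩; exact y.2
    · rintro x ⟨y, hy, rfl⟩ z ⟨w, hw, rfl⟩ hne
      have : (G.induce s).Adj y w := h1 hy hw (fun h => hne (by rw [h]))
      simpa using this
    · intro u w x hu hw hx huw hwx hne
      have hu' : (⟨u, hu.1⟩ : s) ∈ Aᶜ := fun h => hu.2 ⟨_, h, rfl⟩
      have hw' : (⟨w, hw.1⟩ : s) ∈ Aᶜ := fun h => hw.2 ⟨_, h, rfl⟩
      have hx' : (⟨x, hx.1⟩ : s) ∈ Aᶜ := fun h => hx.2 ⟨_, h, rfl⟩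
      have := h2 hu' hw' hx' (by simpa using huw) (by simpa using hwx)
        (fun h => hne (congrArg Subtype.val h))
      simpa using this
  · rintro ⟨A, hAs, h1, h2⟩
    refine ⟨Subtype.val ⁻¹' A, ?_, ?_⟩
    · intro a ha b hb hne
      have : G.Adj a b := h1 ha hb (fun h => hne (Subtype.ext h))
      simpa using this
    · intro u w x hu hw hx huw hwx hne
      have hu' : (u : V) ∈ s \ A := ⟨u.2, hu⟩
      have hw' : (w : V) ∈ s \ A := ⟨w.2, hw⟩
      have hx' : (x : V) ∈ s \ A := ⟨x.2, hx⟩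
      have : G.Adj u x := h2 hu' hw' hx' (by simpa using huw) (by simpa using hwx)
        (fun h => hne (Subtype.ext h))
      simpa using this

lemma uOn_map (e : G ≃g H) {s : Set V} (h : UOn G s) : UOn H (e '' s) := by
  obtain ⟨A, hAs, h1, h2⟩ := h
  refine ⟨e '' A, Set.image_mono hAs, ?_, ?_⟩
  · rintro x ⟨a, ha, rfl⟩ y ⟨b, hb, rfl⟩ hne
    exact e.map_adj_iff.2 (h1 ha hb (fun h => hne (by rw [h])))
  · intro u w x hu hw hx huw hwx hne
    obtain ⟨a, ha, rfl⟩ := hu.1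
    obtain ⟨b, hb, rfl⟩ := hw.1
    obtain ⟨c, hc, rfl⟩ := hx.1
    have ha' : a ∉ A := fun h => hu.2 ⟨a, h, rfl⟩
    have hb' : b ∉ A := fun h => hw.2 ⟨b, h, rfl⟩
    have hc' : c ∉ A := fun h => hx.2 ⟨c, h, rfl⟩
    exact e.map_adj_iff.2 (h2 ⟨ha, ha'⟩ ⟨hb, hb'⟩ ⟨hc, hc'⟩ (e.map_adj_iff.1 huw)
      (e.map_adj_iff.1 hwx) (fun h => hne (by rw [h])))

lemma clique_union_cross {L : Set V} (hcross : ∀ ⦃x y : V⦄, x ∈ L → y ∉ L → G.Adj x y)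
    {X Y : Set V} (hX : X ⊆ L) (hY : Y ⊆ Lᶜ) (hXc : G.IsClique X) (hYc : G.IsClique Y) :
    G.IsClique (X ∪ Y) := by
  intro m hm n hn hne
  rcases hm with hm | hm <;> rcases hn with hn | hn
  · exact hXc hm hn hne
  · exact hcross (hX hm) (hY hn)
  · exact (hcross (hX hn) (hY hm)).symm
  · exact hYc hm hn hne

lemma join_cases {L s : Set V} (hcross : ∀ ⦃x y : V⦄, x ∈ L → y ∉ L → G.Adj x y)
    (h : UOn G s) : G.IsClique (s ∩ L) ∨ G.IsClique (s \ L) ∨ CoBip G s := by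
  obtain ⟨A, hAs, h1, h2⟩ := h
  by_cases hBL : ((s \ A) ∩ L).Nonempty
  · by_cases hBR : ((s \ A) \ L).Nonempty
    · right; right
      refine ⟨A, hAs, h1, ?_⟩
      intro m hm n hn hne
      by_cases hmL : m ∈ L <;> by_cases hnL : n ∈ L
      · obtain ⟨y, hy⟩ := hBR
        exact h2 hm hy.1 hn (hcross hmL hy.2) ((hcross hnL hy.2).symm) hne
      · exact hcross hmL hnL
      · exact (hcross hnL hmL).symm
      · obtain ⟨x, hx⟩ := hBL
        exact h2 hm hx.1 hn ((hcross hx.2 hmL).symm) (hcross hx.2 hnL) hne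
    · right; left
      refine h1.subset fun x hx => ?_
      by_contra hxA
      exact hBR ⟨x, ⟨hx.1, hxA⟩, hx.2⟩
  · left
    refine h1.subset fun x hx => ?_
    by_contra hxA
    exact hBL ⟨x, ⟨hx.1, hxA⟩, hx.2⟩

/-- The core combinatorial lemma. -/
lemma core_lemma {L : Set V} (h1 : ¬ CoBip G L)
    (h2 : ∀ W : Set V, W ⊆ L → W ≠ L → CoBip G W)
    (h3 : UOn G L) : _root_.IsIndepSet G L ∧ L.ncard = 3 := by
  by_cases hT : ∃ x ∈ L, ∃ y ∈ L, ∃ z ∈ L, x ≠ y ∧ x ≠ z ∧ y ≠ z ∧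
      ¬ G.Adj x y ∧ ¬ G.Adj x z ∧ ¬ G.Adj y z
  · obtain ⟨x, hx, y, hy, z, hz, hxy, hxz, hyz, nxy, nxz, nyz⟩ := hT
    have hx3 : x ∈ ({x, y, z} : Set V) := by simp
    have hy3 : y ∈ ({x, y, z} : Set V) := by simp
    have hz3 : z ∈ ({x, y, z} : Set V) := by simp
    have hsub : ({x, y, z} : Set V) ⊆ L := by
      intro w hw
      rcases hw with rfl | rfl | rfl <;> assumption
    have heq : ({x, y, z} : Set V) = L := by
      by_contra hne
      obtain ⟨A, hA, c1, c2⟩ := h2 _ hsub hne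
      by_cases ax : x ∈ A <;> by_cases ay : y ∈ A <;> by_cases az : z ∈ A
      · exact nxy (c1 ax ay hxy)
      · exact nxy (c1 ax ay hxy)
      · exact nxz (c1 ax az hxz)
      · exact nyz (c2 ⟨hy3, ay⟩ ⟨hz3, az⟩ hyz)
      · exact nyz (c1 ay az hyz)
      · exact nxz (c2 ⟨hx3, ax⟩ ⟨hz3, az⟩ hxz)
      · exact nxy (c2 ⟨hx3, ax⟩ ⟨hy3, ay⟩ hxy)
      · exact nxy (c2 ⟨hx3, ax⟩ ⟨hy3, ay⟩ hxy)
    constructor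
    · intro u w hu hw hadj
      rw [← heq] at hu hw
      rcases hu with rfl | rfl | rfl <;> rcases hw with rfl | rfl | rfl <;>
        first
          | exact G.irrefl hadj
          | exact nxy hadj
          | exact nxy hadj.symm
          | exact nxz hadj
          | exact nxz hadj.symm
          | exact nyz hadj
          | exact nyz hadj.symm
    · rw [← heq]
      exact Set.ncard_eq_three.2 ⟨x, y, z, hxy, hxz, hyz, rfl⟩
  · push_neg at hT
    -- hT : ∀ x ∈ L, ∀ y ∈ L, ∀ z ∈ L, x ≠ y → x ≠ z → y ≠ z →
    --        ¬G.Adj x y → ¬G.Adj x z → G.Adj y z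
    exfalso
    obtain ⟨A, hAL, hAc, hB⟩ := h3
    apply h1
    by_cases hBc : G.IsClique (L \ A)
    · exact ⟨A, hAL, hAc, hBc⟩
    · have hpq : ∃ p ∈ L \ A, ∃ q ∈ L \ A, p ≠ q ∧ ¬ G.Adj p q := by
        by_contra h
        push_neg at h
        exact hBc fun p hp q hq hne => h p hp q hq hne
      obtain ⟨p, hp, q, hq, hpq, npq⟩ := hpq
      set B : Set V := L \ A with hBdef
      set P : Set V := {x | x ∈ B ∧ (x = p ∨ G.Adj x p)} with hPdef
      set Q : Set V := B \ P with hQdef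
      have hpP : p ∈ P := ⟨hp, Or.inl rfl⟩
      have hPQ : ∀ ⦃m w : V⦄, m ∈ P → w ∈ Q → ¬ G.Adj m w := by
        intro m w hm hw hadj
        rcases hm.2 with rfl | hmp
        · exact hw.2 ⟨hw.1, Or.inr hadj.symm⟩
        · have hpw : p ≠ w := fun h => hw.2 (h ▸ hpP)
          have : G.Adj p w := hB hp hm.1 hw.1 hmp.symm hadj hpw
          exact hw.2 ⟨hw.1, Or.inr this.symm⟩
      have hQc : G.IsClique Q := by
        intro m hm n hn hne
        by_contra hadj
        have hmp : ¬ G.Adj m p := fun h => hm.2 ⟨hm.1, Or.inr h⟩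
        have hnp : ¬ G.Adj n p := fun h => hn.2 ⟨hn.1, Or.inr h⟩
        have hmP : m ≠ p := fun h => hm.2 (h ▸ hpP)
        have hnP : n ≠ p := fun h => hn.2 (h ▸ hpP)
        exact hadj (hT p hp.1 m hm.1.1 n hn.1.1 (fun h => hmP h.symm)
          (fun h => hnP h.symm) hne (fun h => hmp h.symm) (fun h => hnp h.symm))
      have hPc : G.IsClique P := by
        intro m hm n hn hne
        rcases hm.2 with rfl | hmp
        · rcases hn.2 with rfl | hnp
          · exact absurd rfl hne
          · exact hnp.symm
        · rcases hn.2 with rfl | hnp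
          · exact hmp
          · exact hB hm.1 hp hn.1 hmp hnp.symm hne
      set A1 : Set V := {a | a ∈ A ∧ ∃ w ∈ Q, ¬ G.Adj a w} with hA1def
      refine ⟨P ∪ A1, ?_, ?_, ?_⟩
      · rintro x (hx | hx)
        · exact hx.1.1
        · exact hAL hx.1
      · -- clique (P ∪ A1)
        intro m hm n hn hne
        rcases hm with hm | hm <;> rcases hn with hn | hn
        · exact hPc hm hn hne
        · -- m ∈ P, n ∈ A1
          by_contra hadj
          obtain ⟨w, hw, naw⟩ := hn.2
          have hnm : n ≠ m := fun h => hm.1.2 (h ▸ hn.1)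
          have hnw : n ≠ w := fun h => hw.1.2 (h ▸ hn.1)
          have hmw : m ≠ w := fun h => hw.2 (h ▸ hm)
          exact hPQ hm hw (hT n (hAL hn.1) m hm.1.1 w hw.1.1 hnm hnw hmw
            (fun h => hadj h.symm) naw)
        · -- m ∈ A1, n ∈ P
          by_contra hadj
          obtain ⟨w, hw, naw⟩ := hm.2
          have hmn : m ≠ n := fun h => hn.1.2 (h ▸ hm.1)
          have hmw : m ≠ w := fun h => hw.1.2 (h ▸ hm.1)
          have hnw : n ≠ w := fun h => hw.2 (h ▸ hn)
          exact hPQ hn hw (hT m (hAL hm.1) n hn.1.1 w hw.1.1 hmn hmw hnw hadj naw)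
        · exact hAc hm.1 hn.1 hne
      · -- clique (L \ (P ∪ A1))
        intro m hm n hn hne
        by_cases hmA : m ∈ A <;> by_cases hnA : n ∈ A
        · exact hAc hmA hnA hne
        · -- m ∈ A \ A1, n ∈ Q
          have hnQ : n ∈ Q := ⟨⟨hn.1, hnA⟩, fun h => hn.2 (Or.inl h)⟩
          have hmn : ¬ ∃ w ∈ Q, ¬ G.Adj m w := fun h => hm.2 (Or.inr ⟨hmA, h⟩)
          push_neg at hmn
          exact hmn n hnQ
        · have hmQ : m ∈ Q := ⟨⟨hm.1, hmA⟩, fun h => hm.2 (Or.inl h)⟩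
          have hnm : ¬ ∃ w ∈ Q, ¬ G.Adj n w := fun h => hn.2 (Or.inr ⟨hnA, h⟩)
          push_neg at hnm
          exact (hnm m hmQ).symm
        · exact hQc ⟨⟨hm.1, hmA⟩, fun h => hm.2 (Or.inl h)⟩
            ⟨⟨hn.1, hnA⟩, fun h => hn.2 (Or.inl h)⟩ hne

end Aux


section Aux2

variable {V : Type u} {W : Type v} {G : SimpleGraph V} {H : SimpleGraph W}

lemma not_unipolar_K23 : ¬ Unipolar K23 := by
  rintro ⟨A, hc, hcl⟩
  have key : ∀ j k : Fin 3, j ≠ k → (Sum.inr j : Fin 2 ⊕ Fin 3) ∈ A →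
      (Sum.inr k : Fin 2 ⊕ Fin 3) ∈ A → False := by
    intro j k hjk hj hk
    have := hc hj hk (by simp [hjk])
    simp [K23, completeBipartiteGraph] at this
  have hL2 : (Sum.inl 0 : Fin 2 ⊕ Fin 3) ∉ A ∨ (Sum.inl 1 : Fin 2 ⊕ Fin 3) ∉ A := by
    by_contra h
    push_neg at h
    have := hc h.1 h.2 (by decide)
    simp [K23, completeBipartiteGraph] at this
  obtain ⟨i, hi⟩ : ∃ i : Fin 2, (Sum.inl i : Fin 2 ⊕ Fin 3) ∉ A := by
    rcases hL2 with h | h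
    exacts [⟨0, h⟩, ⟨1, h⟩]
  obtain ⟨j, k, hjk, hj, hk⟩ : ∃ j k : Fin 3, j ≠ k ∧ (Sum.inr j : Fin 2 ⊕ Fin 3) ∉ A ∧
      (Sum.inr k : Fin 2 ⊕ Fin 3) ∉ A := by
    by_cases m0 : (Sum.inr 0 : Fin 2 ⊕ Fin 3) ∈ A
    · exact ⟨1, 2, by decide, fun h => key 0 1 (by decide) m0 h, fun h => key 0 2 (by decide) m0 h⟩
    · by_cases m1 : (Sum.inr 1 : Fin 2 ⊕ Fin 3) ∈ A
      · exact ⟨0, 2, by decide, m0, fun h => key 1 2 (by decide) m1 h⟩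
      · exact ⟨0, 1, by decide, m0, m1⟩
  have := hcl hj hi hk (by simp [K23, completeBipartiteGraph])
    (by simp [K23, completeBipartiteGraph]) (by simp [hjk])
  simp [K23, completeBipartiteGraph] at this

lemma uOn_K23_aux (t : Set (Fin 2 ⊕ Fin 3)) (i j j2 : Fin 3)
    (hperm : ∀ k : Fin 3, k = i ∨ k = j ∨ k = j2)
    (hx : (Sum.inr i : Fin 2 ⊕ Fin 3) ∉ t) : UOn K23 t := by
  refine ⟨t ∩ {Sum.inl 0, Sum.inr j}, Set.inter_subset_left, ?_, ?_⟩
  · intro m hm n hn hne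
    have hm' := hm.2
    have hn' := hn.2
    simp only [Set.mem_insert_iff, Set.mem_singleton_iff] at hm' hn'
    rcases hm' with rfl | rfl <;> rcases hn' with rfl | rfl
    · exact absurd rfl hne
    · simp [K23, completeBipartiteGraph]
    · simp [K23, completeBipartiteGraph]
    · exact absurd rfl hne
  · have hsub : t \ (t ∩ {Sum.inl 0, Sum.inr j}) ⊆
        {(Sum.inl 1 : Fin 2 ⊕ Fin 3), Sum.inr j2} := by
      rintro (a | k) hy
      · fin_cases a
        · exact absurd ⟨hy.1, by simp⟩ hy.2
        · simp
      · rcases hperm k with rfl | rfl | rfl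
        · exact absurd hy.1 hx
        · exact absurd ⟨hy.1, by simp⟩ hy.2
        · simp
    intro u w x hu hw hx' huw hwx hne
    have hu' := hsub hu
    have hw' := hsub hw
    have hx'' := hsub hx'
    simp only [Set.mem_insert_iff, Set.mem_singleton_iff] at hu' hw' hx''
    rcases hu' with rfl | rfl <;> rcases hw' with rfl | rfl <;> rcases hx'' with rfl | rfl <;>
      first
        | exact absurd rfl hne
        | exact absurd huw K23.irrefl
        | exact absurd hwx K23.irrefl

lemma uOn_K23 (t : Set (Fin 2 ⊕ Fin 3)) (ht : t ≠ Set.univ) : UOn K23 t := by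
  have hex : ∃ x, x ∉ t := by
    by_contra h
    push_neg at h
    exact ht (Set.eq_univ_iff_forall.2 h)
  obtain ⟨x, hx⟩ := hex
  rcases x with i | i
  · refine ⟨t ∩ {Sum.inl 0, Sum.inl 1}, Set.inter_subset_left, ?_, ?_⟩
    · intro m hm n hn hne
      have hm' := hm.2
      have hn' := hn.2
      simp only [Set.mem_insert_iff, Set.mem_singleton_iff] at hm' hn'
      fin_cases i <;>
        (rcases hm' with rfl | rfl <;> rcases hn' with rfl | rfl <;>
          first
            | exact absurd hm.1 hx
            | exact absurd hn.1 hx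
            | exact absurd rfl hne)
    · have hall : ∀ y ∈ t \ (t ∩ {Sum.inl 0, Sum.inl 1}), ∃ k : Fin 3, y = Sum.inr k := by
        rintro (a | k) hy
        · exact absurd ⟨hy.1, by fin_cases a <;> simp⟩ hy.2
        · exact ⟨k, rfl⟩
      intro u w x hu hw hx' huw hwx hne
      obtain ⟨k1, rfl⟩ := hall u hu
      obtain ⟨k2, rfl⟩ := hall w hw
      simp [K23, completeBipartiteGraph] at huw
  · fin_cases i
    · exact uOn_K23_aux t 0 1 2 (by decide) hx
    · exact uOn_K23_aux t 1 0 2 (by decide) hx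
    · exact uOn_K23_aux t 2 0 1 (by decide) hx

lemma minObs_K23 : MinUnipolarObstruction K23 :=
  ⟨not_unipolar_K23, fun s hs => (unipolar_induce_iff s).2 (uOn_K23 s hs)⟩

lemma minObs_of_iso (e : G ≃g H) (h : MinUnipolarObstruction H) :
    MinUnipolarObstruction G := by
  obtain ⟨h1, h2⟩ := h
  constructor
  · intro hU
    apply h1
    have := uOn_map e (unipolar_iff_uOn_univ.1 hU)
    rw [Set.image_univ, Function.Surjective.range_eq e.surjective] at this
    exact unipolar_iff_uOn_univ.2 this
  · intro s hs
    have hts : e '' s ≠ Set.univ := by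
      intro h
      apply hs
      apply Set.eq_univ_iff_forall.2
      intro x
      have hmem : e x ∈ e '' s := h ▸ Set.mem_univ _
      obtain ⟨y, hy, hyx⟩ := hmem
      rwa [← e.injective hyx]
    have hmain := uOn_map e.symm ((unipolar_induce_iff (e '' s)).1 (h2 _ hts))
    have heq : ⇑e.symm '' (⇑e '' s) = s := by
      ext x
      constructor
      · rintro ⟨z, ⟨w, hw, rfl⟩, rfl⟩
        simpa using hw
      · intro hxs
        exact ⟨e x, ⟨x, hxs, rfl⟩, by simp⟩
    rw [heq] at hmain
    exact (unipolar_induce_iff s).2 hmain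

lemma forward_core {L : Set V} (hcross : ∀ ⦃x y : V⦄, x ∈ L → y ∉ L → G.Adj x y)
    (hL : L.Nonempty) (hR : Lᶜ.Nonempty)
    (hnot : ¬ UOn G Set.univ) (hmin : ∀ s : Set V, s ≠ Set.univ → UOn G s)
    (hnc : ¬ CoBip G L) :
    _root_.IsIndepSet G L ∧ L.ncard = 3 ∧ _root_.IsIndepSet G Lᶜ ∧ Lᶜ.ncard = 2 := by
  obtain ⟨y0, hy0⟩ := hR
  obtain ⟨x0, hx0⟩ := hL
  have hLne : L ≠ Set.univ := by
    intro h
    exact hy0 (by rw [h]; trivial)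
  have hRne : Lᶜ ≠ Set.univ := by
    intro h
    have : x0 ∈ Lᶜ := by rw [h]; trivial
    exact this hx0
  have hKR : ¬ G.IsClique Lᶜ := by
    intro hK
    obtain ⟨A, hAL, hAc, hAcl⟩ := hmin L hLne
    apply hnot
    refine ⟨A ∪ Lᶜ, Set.subset_univ _,
      clique_union_cross hcross hAL (le_refl _) hAc hK, ?_⟩
    have heq : Set.univ \ (A ∪ Lᶜ) = L \ A := by
      ext z
      simp only [Set.mem_diff, Set.mem_univ, true_and, Set.mem_union,
        Set.mem_compl_iff, not_or, not_not, and_comm]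
    rw [heq]
    exact hAcl
  have hKL : ¬ G.IsClique L := by
    intro hK
    obtain ⟨A, hAL, hAc, hAcl⟩ := hmin Lᶜ hRne
    apply hnot
    refine ⟨L ∪ A, Set.subset_univ _,
      clique_union_cross hcross (le_refl _) hAL hK hAc, ?_⟩
    have heq : Set.univ \ (L ∪ A) = Lᶜ \ A := by
      ext z
      simp only [Set.mem_diff, Set.mem_univ, true_and, Set.mem_union,
        Set.mem_compl_iff, not_or, and_comm]
    rw [heq]
    exact hAcl
  have hD : ∀ u ∈ Lᶜ, G.IsClique (Lᶜ \ {u}) := by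
    intro u hu
    have hs : ({u}ᶜ : Set V) ≠ Set.univ := by
      intro h
      have : u ∈ ({u}ᶜ : Set V) := by rw [h]; trivial
      exact this rfl
    rcases join_cases hcross (hmin _ hs) with h | h | h
    · exfalso
      apply hKL
      apply h.subset
      intro z hz
      exact ⟨fun hzu => hu (Set.mem_singleton_iff.1 hzu ▸ hz), hz⟩
    · apply h.subset
      intro z hz
      exact ⟨hz.2, hz.1⟩
    · refine absurd (h.mono ?_) hnc
      intro z hz h'
      exact hu (Set.mem_singleton_iff.1 h' ▸ hz)
  have hEx : ∃ u ∈ Lᶜ, ∃ v ∈ Lᶜ, u ≠ v ∧ ¬ G.Adj u v := by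
    by_contra h
    push_neg at h
    exact hKR fun u hu v hv hne => h u hu v hv hne
  obtain ⟨u, hu, v, hv, huv, nuv⟩ := hEx
  have hRe : Lᶜ = {u, v} := by
    ext z
    simp only [Set.mem_insert_iff, Set.mem_singleton_iff]
    constructor
    · intro hz
      by_contra hzz
      push_neg at hzz
      exact nuv (hD z hz ⟨hu, fun h' => hzz.1 (Set.mem_singleton_iff.1 h').symm⟩
        ⟨hv, fun h' => hzz.2 (Set.mem_singleton_iff.1 h').symm⟩ huv)
    · rintro (rfl | rfl)
      exacts [hu, hv]
  have hRind : _root_.IsIndepSet G Lᶜ := by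
    intro m n hm hn hadj
    rw [hRe] at hm hn
    simp only [Set.mem_insert_iff, Set.mem_singleton_iff] at hm hn
    rcases hm with rfl | rfl <;> rcases hn with rfl | rfl
    · exact G.irrefl hadj
    · exact nuv hadj
    · exact nuv hadj.symm
    · exact G.irrefl hadj
  have hRcard : Lᶜ.ncard = 2 := by
    rw [hRe]
    exact Set.ncard_eq_two.2 ⟨u, v, huv, rfl⟩
  have hF : ∀ W : Set V, W ⊆ L → W ≠ L → CoBip G W := by
    intro W hWL hWne
    have hnsub : ¬ L ⊆ W := fun h => hWne (le_antisymm hWL h)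
    obtain ⟨z, hzL, hzW⟩ := Set.not_subset.1 hnsub
    have hs : W ∪ Lᶜ ≠ Set.univ := by
      intro h
      have hzz : z ∈ W ∪ Lᶜ := by rw [h]; trivial
      rcases hzz with h' | h'
      · exact hzW h'
      · exact h' hzL
    rcases join_cases hcross (hmin _ hs) with h | h | h
    · apply coBip_of_clique
      apply h.subset
      intro a ha
      exact ⟨Or.inl ha, hWL ha⟩
    · exfalso
      apply hKR
      apply h.subset
      intro a ha
      exact ⟨Or.inr ha, ha⟩
    · exact h.mono Set.subset_union_left
  obtain ⟨hind, hcard⟩ := core_lemma hnc hF (hmin L hLne)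
  exact ⟨hind, hcard, hRind, hRcard⟩

lemma iso_K23_of_parts {L : Set V} (hind3 : _root_.IsIndepSet G L) (h3 : L.ncard = 3)
    (hind2 : _root_.IsIndepSet G Lᶜ) (h2 : Lᶜ.ncard = 2)
    (hcross : ∀ ⦃x y : V⦄, x ∈ L → y ∉ L → G.Adj x y) :
    Nonempty (G ≃g K23) := by
  obtain ⟨a, b, c, hab, hac, hbc, hLe⟩ := Set.ncard_eq_three.1 h3
  obtain ⟨p, q, hpq, hRe⟩ := Set.ncard_eq_two.1 h2
  set f : Fin 2 ⊕ Fin 3 → V := Sum.elim ![p, q] ![a, b, c] with hfdef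
  have hfL : ∀ i : Fin 3, (![a, b, c] i) ∈ L := by
    intro i
    rw [hLe]
    fin_cases i <;> simp
  have hfR : ∀ i : Fin 2, (![p, q] i) ∈ Lᶜ := by
    intro i
    rw [hRe]
    fin_cases i <;> simp
  have hinj : Function.Injective f := by
    rintro (i | i) (j | j) h
    · simp only [hfdef, Sum.elim_inl] at h
      fin_cases i <;> fin_cases j <;> simp_all
    · exfalso
      apply hfR i
      show f (Sum.inl i) ∈ L
      rw [h]
      exact hfL j
    · exfalso
      apply hfR j
      show f (Sum.inl j) ∈ L
      rw [← h]
      exact hfL i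
    · simp only [hfdef, Sum.elim_inr] at h
      fin_cases i <;> fin_cases j <;> simp_all
  have hsurj : Function.Surjective f := by
    intro x
    by_cases hx : x ∈ L
    · rw [hLe] at hx
      simp only [Set.mem_insert_iff, Set.mem_singleton_iff] at hx
      rcases hx with rfl | rfl | rfl
      exacts [⟨Sum.inr 0, by simp [hfdef]⟩, ⟨Sum.inr 1, by simp [hfdef]⟩,
        ⟨Sum.inr 2, by simp [hfdef]⟩]
    · have hx' : x ∈ Lᶜ := hx
      rw [hRe] at hx'
      simp only [Set.mem_insert_iff, Set.mem_singleton_iff] at hx'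
      rcases hx' with rfl | rfl
      exacts [⟨Sum.inl 0, by simp [hfdef]⟩, ⟨Sum.inl 1, by simp [hfdef]⟩]
  have hadj : ∀ x y, G.Adj (f x) (f y) ↔ K23.Adj x y := by
    rintro (i | i) (j | j)
    · exact iff_of_false (hind2 (hfR i) (hfR j)) (by simp [K23, completeBipartiteGraph])
    · exact iff_of_true ((hcross (hfL j) (hfR i)).symm)
        (by simp [K23, completeBipartiteGraph])
    · exact iff_of_true (hcross (hfL i) (hfR j)) (by simp [K23, completeBipartiteGraph])
    · exact iff_of_false (hind3 (hfL i) (hfL j)) (by simp [K23, completeBipartiteGraph])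
  exact ⟨RelIso.symm ⟨Equiv.ofBijective f ⟨hinj, hsurj⟩, fun {x y} => hadj x y⟩⟩

end Aux2

/-- If the complement of `G` is disconnected, then `G` is a minimal unipolar
obstruction if and only if `G` is isomorphic to `K_{2,3}`. -/
theorem stmt_1 {V : Type*} [Fintype V] (G : SimpleGraph V) (hG : ¬ Gᶜ.Preconnected) :
    MinUnipolarObstruction G ↔ Nonempty (G ≃g K23) := by
  constructor
  · rintro ⟨hnot, hmin⟩
    have hG' : ∃ a b : V, ¬ Gᶜ.Reachable a b := by
      by_contra h
      push_neg at h
      exact hG h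
    obtain ⟨a0, b0, hab⟩ := hG'
    set L : Set V := {x | Gᶜ.Reachable a0 x} with hLdef
    have haL : a0 ∈ L := Reachable.refl a0
    have hbL : b0 ∉ L := hab
    have hcross : ∀ ⦃x y : V⦄, x ∈ L → y ∉ L → G.Adj x y := by
      intro x y hx hy
      by_contra hadj
      have hne : x ≠ y := fun h => hy (h ▸ hx)
      have hadj' : Gᶜ.Adj x y := by
        rw [compl_adj]
        exact ⟨hne, hadj⟩
      exact hy (Reachable.trans hx hadj'.reachable)
    have hmin' : ∀ s : Set V, s ≠ Set.univ → UOn G s :=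
      fun s hs => (unipolar_induce_iff s).1 (hmin s hs)
    have hnot' : ¬ UOn G Set.univ := fun h => hnot (unipolar_iff_uOn_univ.2 h)
    have hLne : L.Nonempty := ⟨a0, haL⟩
    have hRne : Lᶜ.Nonempty := ⟨b0, hbL⟩
    by_cases hnc : CoBip G L
    · have hnc2 : ¬ CoBip G Lᶜ := by
        intro h2
        obtain ⟨A1, hA1, c1, c1'⟩ := hnc
        obtain ⟨A2, hA2, c2, c2'⟩ := h2
        apply hnot'
        refine ⟨A1 ∪ A2, Set.subset_univ _, clique_union_cross hcross hA1 hA2 c1 c2, ?_⟩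
        have heq : Set.univ \ (A1 ∪ A2) = (L \ A1) ∪ (Lᶜ \ A2) := by
          ext z
          constructor
          · rintro ⟨-, hz⟩
            by_cases hzL : z ∈ L
            · exact Or.inl ⟨hzL, fun h => hz (Or.inl h)⟩
            · exact Or.inr ⟨hzL, fun h => hz (Or.inr h)⟩
          · rintro (⟨h1, h2⟩ | ⟨h1, h2⟩) <;> refine ⟨trivial, ?_⟩
            · rintro (h | h)
              · exact h2 h
              · exact hA2 h h1
            · rintro (h | h)
              · exact h1 (hA1 h)
              · exact h2 h
        rw [heq]
        exact isClusterSet_of_isClique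
          (clique_union_cross hcross Set.diff_subset Set.diff_subset c1' c2')
      have hcross2 : ∀ ⦃x y : V⦄, x ∈ Lᶜ → y ∉ Lᶜ → G.Adj x y := by
        intro x y hx hy
        exact (hcross (not_not.1 hy) hx).symm
      have hRne2 : (Lᶜ)ᶜ.Nonempty := by
        rw [compl_compl]
        exact hLne
      obtain ⟨i3, c3, i2, c2⟩ := forward_core hcross2 hRne hRne2 hnot' hmin' hnc2
      exact iso_K23_of_parts i3 c3 i2 c2 hcross2
    · obtain ⟨i3, c3, i2, c2⟩ := forward_core hcross hLne hRne hnot' hmin' hnc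
      exact iso_K23_of_parts i3 c3 i2 c2 hcross
  · rintro ⟨e⟩
    exact minObs_of_iso e minObs_K23
end

section
/- Let G = (S,K,R) be a spider (with possibly empty head R). Then G is unipolar if and only if R is empty or the induced subgraph G[R] is unipolar. -/
open SimpleGraph

universe u v

/-- A spider `G = (S, K, R)` is unipolar iff `R` is empty or `G[R]` is unipolar. -/
theorem stmt_2 {V : Type*} [Fintype V] (G : SimpleGraph V) (S K R : Set V)
    (h : IsSpiderPartition G S K R) :
    Unipolar G ↔ R = ∅ ∨ Unipolar (G.induce R) := by
  obtain ⟨hcov, hSK, hSR, hKR, hcard, hK2, hKcl, hSind, -, hRK, hRS⟩ := h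
  have mem3 : ∀ v : V, v ∈ S ∨ v ∈ K ∨ v ∈ R := by
    intro v
    have hv : v ∈ S ∪ K ∪ R := hcov ▸ Set.mem_univ v
    rcases hv with (hv | hv) | hv
    · exact Or.inl hv
    · exact Or.inr (Or.inl hv)
    · exact Or.inr (Or.inr hv)
  constructor
  · rintro ⟨A, hA, hC⟩
    right
    refine ⟨Subtype.val ⁻¹' A, ?_, ?_⟩
    · intro u hu w hw hne
      exact hA hu hw (fun e => hne (Subtype.ext e))
    · intro u w x hu hw hx huw hwx hne
      exact hC hu hw hx huw hwx (fun e => hne (Subtype.ext e))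
  · rintro (hRe | ⟨A, hA, hC⟩)
    · refine ⟨K, hKcl, ?_⟩
      intro u w x hu hw hx huw hwx hne
      exfalso
      have hu' : u ∈ S := by
        rcases mem3 u with h | h | h
        · exact h
        · exact absurd h hu
        · simp [hRe] at h
      have hw' : w ∈ S := by
        rcases mem3 w with h | h | h
        · exact h
        · exact absurd h hw
        · simp [hRe] at h
      exact hSind hu' hw' huw
    · refine ⟨Subtype.val '' A ∪ K, ?_, ?_⟩
      · intro u hu w hw hne
        rcases hu with ⟨u', hu', rfl⟩ | hu <;> rcases hw with ⟨w', hw', rfl⟩ | hw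
        · exact hA hu' hw' (fun e => hne (congrArg Subtype.val e))
        · exact hRK _ u'.2 _ hw
        · exact (hRK _ w'.2 _ hu).symm
        · exact hKcl hu hw hne
      · intro u w x hu hw hx huw hwx hne
        have hu1 : u ∉ Subtype.val '' A ∧ u ∉ K := by
          constructor <;> intro hk <;> exact hu (by simp [hk])
        have hw1 : w ∉ Subtype.val '' A ∧ w ∉ K := by
          constructor <;> intro hk <;> exact hw (by simp [hk])
        have hx1 : x ∉ Subtype.val '' A ∧ x ∉ K := by
          constructor <;> intro hk <;> exact hx (by simp [hk])
        -- w ∈ R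
        have hwR : w ∈ R := by
          rcases mem3 w with hws | hwk | hwr
          · -- w ∈ S : contradiction via u
            exfalso
            rcases mem3 u with hus | huk | hur
            · exact hSind hus hws huw
            · exact hu1.2 huk
            · exact hRS u hur w hws huw
          · exact absurd hwk hw1.2
          · exact hwr
        have huR : u ∈ R := by
          rcases mem3 u with hus | huk | hur
          · exact absurd huw.symm (hRS w hwR u hus)
          · exact absurd huk hu1.2
          · exact hur
        have hxR : x ∈ R := by
          rcases mem3 x with hxs | hxk | hxr
          · exact absurd hwx (hRS w hwR x hxs)
          · exact absurd hxk hx1.2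
          · exact hxr
        have hu2 : (⟨u, huR⟩ : R) ∈ Aᶜ := fun hmem => hu1.1 ⟨⟨u, huR⟩, hmem, rfl⟩
        have hw2 : (⟨w, hwR⟩ : R) ∈ Aᶜ := fun hmem => hw1.1 ⟨⟨w, hwR⟩, hmem, rfl⟩
        have hx2 : (⟨x, hxR⟩ : R) ∈ Aᶜ := fun hmem => hx1.1 ⟨⟨x, hxR⟩, hmem, rfl⟩
        exact hC hu2 hw2 hx2 huw hwx (fun e => hne (congrArg Subtype.val e))
end

section
/- Let G = (S,K,R) be a P-spider, where P is the banner graph (a four-cycle with one pendant vertex attached). Then G is unipolar if and only if R is empty or R is a clique. Consequently, no P-spider is a minimal unipolar obstruction. -/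
open SimpleGraph

universe u v

lemma core_half {V : Type*} (H : SimpleGraph V) (a b c d r1 r2 : V)
    (A : Set V) (hA : H.IsClique A) (hB : IsClusterSet H Aᶜ)
    (hac : a ≠ c) (hr1c : r1 ≠ c) (hr2c : r2 ≠ c) (hrr' : r1 ≠ r2)
    (hcd : H.Adj c d) (hda : H.Adj d a)
    (hr1a : H.Adj r1 a) (hr2a : H.Adj r2 a) (hr2d : H.Adj r2 d)
    (hnac : ¬ H.Adj a c) (hnr1c : ¬ H.Adj r1 c) (hnr2c : ¬ H.Adj r2 c)
    (hnrr : ¬ H.Adj r1 r2)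
    (hr2A : r2 ∉ A) (hdA : d ∉ A) : False := by
  by_cases ha : a ∈ A
  · have hcA : c ∉ A := fun hc => hnac (hA ha hc hac)
    exact hnr2c ((hB hcA hdA hr2A hcd hr2d.symm (Ne.symm hr2c)).symm)
  · by_cases hr1 : r1 ∈ A
    · have hcA : c ∉ A := fun hc => hnr1c (hA hr1 hc hr1c)
      exact hnac (hB ha hdA hcA hda.symm hcd.symm hac)
    · exact hnrr (hB hr1 ha hr2A hr1a hr2a.symm hrr')

lemma coreA {V : Type*} (H : SimpleGraph V) (a b c d r1 r2 : V)
    (A : Set V) (hA : H.IsClique A) (hB : IsClusterSet H Aᶜ)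
    (hac : a ≠ c) (hbd : b ≠ d) (hr1c : r1 ≠ c) (hr2c : r2 ≠ c) (hrr' : r1 ≠ r2)
    (hab : H.Adj a b) (hbc : H.Adj b c) (hcd : H.Adj c d) (hda : H.Adj d a)
    (hr1a : H.Adj r1 a)
    (hr2a : H.Adj r2 a) (hr2b : H.Adj r2 b) (hr2d : H.Adj r2 d)
    (hnac : ¬ H.Adj a c) (hnbd : ¬ H.Adj b d)
    (hnr1c : ¬ H.Adj r1 c) (hnr2c : ¬ H.Adj r2 c) (hnrr : ¬ H.Adj r1 r2)
    (hr2A : r2 ∉ A) : False := by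
  by_cases hb : b ∈ A
  · have hd : d ∉ A := fun h => hnbd (hA hb h hbd)
    exact core_half H a b c d r1 r2 A hA hB hac hr1c hr2c hrr' hcd hda hr1a hr2a hr2d
      hnac hnr1c hnr2c hnrr hr2A hd
  · by_cases hd : d ∈ A
    · exact core_half H a d c b r1 r2 A hA hB hac hr1c hr2c hrr' hbc.symm hab.symm
        hr1a hr2a hr2b hnac hnr1c hnr2c hnrr hr2A hb
    · exact hnbd (hB hb hr2A hd hr2b.symm hr2d hbd)

lemma core_notUnipolar {V : Type*} (H : SimpleGraph V) (a b c d r1 r2 : V)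
    (hac : a ≠ c) (hbd : b ≠ d) (hr1c : r1 ≠ c) (hr2c : r2 ≠ c) (hrr' : r1 ≠ r2)
    (hab : H.Adj a b) (hbc : H.Adj b c) (hcd : H.Adj c d) (hda : H.Adj d a)
    (hr1a : H.Adj r1 a) (hr1b : H.Adj r1 b) (hr1d : H.Adj r1 d)
    (hr2a : H.Adj r2 a) (hr2b : H.Adj r2 b) (hr2d : H.Adj r2 d)
    (hnac : ¬ H.Adj a c) (hnbd : ¬ H.Adj b d)
    (hnr1c : ¬ H.Adj r1 c) (hnr2c : ¬ H.Adj r2 c) (hnrr : ¬ H.Adj r1 r2) :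
    ¬ Unipolar H := by
  rintro ⟨A, hA, hB⟩
  by_cases hr2 : r2 ∈ A
  · have hr1 : r1 ∉ A := fun h => hnrr (hA h hr2 hrr')
    exact coreA H a b c d r2 r1 A hA hB hac hbd hr2c hr1c hrr'.symm hab hbc hcd hda
      hr2a hr1a hr1b hr1d hnac hnbd hnr2c hnr1c (fun h => hnrr h.symm) hr1
  · exact coreA H a b c d r1 r2 A hA hB hac hbd hr1c hr2c hrr' hab hbc hcd hda
      hr1a hr2a hr2b hr2d hnac hnbd hnr1c hnr2c hnrr hr2


/-- A `P`-spider (`P` the banner) `G = (S, K, R)` is unipolar iff `R` is empty or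
`R` is a clique; consequently no `P`-spider is a minimal unipolar obstruction. -/
theorem stmt_5 {V : Type*} [Fintype V] (G : SimpleGraph V) (S K R : Set V)
    (h : IsBaseSpider banner ({0, 1, 3} : Set (Fin 5)) ({2, 4} : Set (Fin 5)) G S K R) :
    (Unipolar G ↔ R = ∅ ∨ G.IsClique R) ∧ ¬ MinUnipolarObstruction G := by
  obtain ⟨f, hinj, hadj, hK, hS, hR, hRK, hRS⟩ := h
  have hK0 : f 0 ∈ K := by rw [hK]; exact ⟨0, by simp, rfl⟩
  have hK1 : f 1 ∈ K := by rw [hK]; exact ⟨1, by simp, rfl⟩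
  have hK3 : f 3 ∈ K := by rw [hK]; exact ⟨3, by simp, rfl⟩
  have hS2 : f 2 ∈ S := by rw [hS]; exact ⟨2, by simp, rfl⟩
  have hRr : ∀ r ∈ R, ∀ i, r ≠ f i := by
    intro r hr i he
    rw [hR] at hr
    exact hr ⟨i, he.symm⟩
  have hfne : ∀ i j : Fin 5, i ≠ j → f i ≠ f j := fun i j hij he => hij (hinj he)
  have hGadj : ∀ i j : Fin 5, banner.Adj i j → G.Adj (f i) (f j) :=
    fun i j hb => (hadj i j).mpr hb
  have hGnadj : ∀ i j : Fin 5, ¬ banner.Adj i j → ¬ G.Adj (f i) (f j) :=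
    fun i j hb hg => hb ((hadj i j).mp hg)
  -- key: if R is not a clique, then G is not unipolar
  have main : ¬ G.IsClique R → ¬ Unipolar G := by
    intro hnc
    rw [SimpleGraph.isClique_iff, Set.Pairwise] at hnc
    push_neg at hnc
    obtain ⟨r1, hr1, r2, hr2, hne, hnadj⟩ := hnc
    exact core_notUnipolar G (f 0) (f 1) (f 2) (f 3) r1 r2
      (hfne 0 2 (by decide)) (hfne 1 3 (by decide)) (hRr r1 hr1 2) (hRr r2 hr2 2) hne
      (hGadj 0 1 (by simp [banner, Sym2.eq_iff]))
      (hGadj 1 2 (by simp [banner, Sym2.eq_iff]))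
      (hGadj 2 3 (by simp [banner, Sym2.eq_iff]))
      (hGadj 3 0 (by simp [banner, Sym2.eq_iff]))
      (hRK r1 hr1 _ hK0) (hRK r1 hr1 _ hK1) (hRK r1 hr1 _ hK3)
      (hRK r2 hr2 _ hK0) (hRK r2 hr2 _ hK1) (hRK r2 hr2 _ hK3)
      (hGnadj 0 2 (by simp [banner, Sym2.eq_iff]))
      (hGnadj 1 3 (by simp [banner, Sym2.eq_iff]))
      (hRS r1 hr1 _ hS2) (hRS r2 hr2 _ hS2) hnadj
  -- key: if R is a clique, then G is unipolar
  have back : G.IsClique R → Unipolar G := by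
    intro hcl
    refine ⟨R ∪ {f 0, f 1}, ?_, ?_⟩
    · rw [SimpleGraph.isClique_iff]
      intro x hx y hy hxy
      rcases hx with hx | hx | hx <;> rcases hy with hy | hy | hy
      · exact hcl hx hy hxy
      · exact hy ▸ hRK x hx _ hK0
      · exact (Set.mem_singleton_iff.mp hy) ▸ hRK x hx _ hK1
      · exact hx ▸ (hRK y hy _ hK0).symm
      · exact absurd (hx.trans hy.symm) hxy
      · rw [hx, Set.mem_singleton_iff.mp hy]; exact hGadj 0 1 (by simp [banner, Sym2.eq_iff])
      · exact (Set.mem_singleton_iff.mp hx) ▸ (hRK y hy _ hK1).symm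
      · rw [Set.mem_singleton_iff.mp hx, hy]
        exact (hGadj 0 1 (by simp [banner, Sym2.eq_iff])).symm
      · exact absurd ((Set.mem_singleton_iff.mp hx).trans (Set.mem_singleton_iff.mp hy).symm) hxy
    · intro u w x hu hw hx huw hwx hux
      have hmem : ∀ v, v ∈ (R ∪ {f 0, f 1})ᶜ → v = f 2 ∨ v = f 3 ∨ v = f 4 := by
        intro v hv
        simp only [Set.mem_compl_iff, Set.mem_union, Set.mem_insert_iff,
          Set.mem_singleton_iff, not_or] at hv
        obtain ⟨hvR, hv0, hv1⟩ := hv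
        have hvr : v ∈ Set.range f := by
          by_contra hc
          exact hvR (hR ▸ hc)
        obtain ⟨i, rfl⟩ := hvr
        have h0 : i ≠ 0 := fun hh => hv0 (by rw [hh])
        have h1 : i ≠ 1 := fun hh => hv1 (by rw [hh])
        have hcase : ∀ j : Fin 5, j ≠ 0 → j ≠ 1 → j = 2 ∨ j = 3 ∨ j = 4 := by decide
        rcases hcase i h0 h1 with rfl | rfl | rfl <;> simp
      rcases hmem u hu with rfl | rfl | rfl <;> rcases hmem w hw with rfl | rfl | rfl <;>
        rcases hmem x hx with rfl | rfl | rfl <;>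
        rw [hadj] at huw hwx <;>
        first
          | exact absurd rfl hux
          | simp [banner, Sym2.eq_iff] at huw hwx
  constructor
  · constructor
    · intro hu
      by_contra hc
      push_neg at hc
      exact main hc.2 hu
    · rintro (rfl | hcl)
      · exact back (by simp [SimpleGraph.isClique_empty])
      · exact back hcl
  · rintro ⟨hnu, hall⟩
    have hnc : ¬ G.IsClique R := fun hc => hnu (back hc)
    rw [SimpleGraph.isClique_iff, Set.Pairwise] at hnc
    push_neg at hnc
    obtain ⟨r1, hr1, r2, hr2, hne, hnadj⟩ := hnc
    have h4 : f 4 ∉ ({f 0, f 1, f 2, f 3, r1, r2} : Set V) := by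
      simp only [Set.mem_insert_iff, Set.mem_singleton_iff, not_or]
      exact ⟨hfne 4 0 (by decide), hfne 4 1 (by decide), hfne 4 2 (by decide),
        hfne 4 3 (by decide), (hRr r1 hr1 4).symm, (hRr r2 hr2 4).symm⟩
    have hsne : ({f 0, f 1, f 2, f 3, r1, r2} : Set V) ≠ Set.univ := by
      intro hh
      exact h4 (hh ▸ Set.mem_univ _)
    have hsub := hall _ hsne
    revert hsub
    refine core_notUnipolar (G.induce ({f 0, f 1, f 2, f 3, r1, r2} : Set V))
      ⟨f 0, by simp⟩ ⟨f 1, by simp⟩ ⟨f 2, by simp⟩ ⟨f 3, by simp⟩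
      ⟨r1, by simp⟩ ⟨r2, by simp⟩
      ?_ ?_ ?_ ?_ ?_ ?_ ?_ ?_ ?_ ?_ ?_ ?_ ?_ ?_ ?_ ?_ ?_ ?_ ?_ ?_
    · exact fun hh => hfne 0 2 (by decide) (congrArg Subtype.val hh)
    · exact fun hh => hfne 1 3 (by decide) (congrArg Subtype.val hh)
    · exact fun hh => hRr r1 hr1 2 (congrArg Subtype.val hh)
    · exact fun hh => hRr r2 hr2 2 (congrArg Subtype.val hh)
    · exact fun hh => hne (congrArg Subtype.val hh)
    · exact hGadj 0 1 (by simp [banner, Sym2.eq_iff])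
    · exact hGadj 1 2 (by simp [banner, Sym2.eq_iff])
    · exact hGadj 2 3 (by simp [banner, Sym2.eq_iff])
    · exact hGadj 3 0 (by simp [banner, Sym2.eq_iff])
    · exact hRK r1 hr1 _ hK0
    · exact hRK r1 hr1 _ hK1
    · exact hRK r1 hr1 _ hK3
    · exact hRK r2 hr2 _ hK0
    · exact hRK r2 hr2 _ hK1
    · exact hRK r2 hr2 _ hK3
    · exact hGnadj 0 2 (by simp [banner, Sym2.eq_iff])
    · exact hGnadj 1 3 (by simp [banner, Sym2.eq_iff])
    · exact hRS r1 hr1 _ hS2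
    · exact hRS r2 hr2 _ hS2
    · exact hnadj
end

section
/- For every integer s ≥ 2, each of the following seven graphs is a minimal (s,1)-polar obstruction: E1 = K_1 + 2K_2; E2 = 2P_3; E3 = C_4 + 2K_1; E7 = K_1 + complement(P_3 + K_2); E10 = K_1 + C_5; E11 = K_1 + P, where P is the banner graph (a four-cycle with one pendant vertex attached); and E12 = K_1 + complement(P_5). Consequently, these seven graphs are minimal (∞,1)-polar obstructions (minimal monopolar-complement obstructions). -/
open SimpleGraph

universe u v

/-! ### Auxiliary machinery for stmt_6 -/

section Aux

lemma sone_mono' {V : Type*} (G : SimpleGraph V) {s t : ℕ} (h : s ≤ t) :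
    SOnePolar s G → SOnePolar t G := by
  rintro ⟨A, ⟨f, hf⟩, hcl⟩
  refine ⟨A, ⟨fun u => Fin.castLE h (f u), fun u w => ?_⟩, hcl⟩
  rw [hf]
  exact (Fin.castLE_injective h).ne_iff.symm

lemma sone_to_inf' {V : Type*} {s : ℕ} (G : SimpleGraph V) :
    SOnePolar s G → InfOnePolar G := by
  rintro ⟨A, ⟨f, hf⟩, hcl⟩
  refine ⟨A, ?_, hcl⟩
  intro u w x hu hw hx _ _ _ h1 h2
  intro hadj
  have e1 : f ⟨u, hu⟩ = f ⟨w, hw⟩ := by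
    by_contra hne; exact h1 ((hf ⟨u, hu⟩ ⟨w, hw⟩).mpr hne)
  have e2 : f ⟨w, hw⟩ = f ⟨x, hx⟩ := by
    by_contra hne; exact h2 ((hf ⟨w, hw⟩ ⟨x, hx⟩).mpr hne)
  exact ((hf ⟨u, hu⟩ ⟨x, hx⟩).mp hadj) (e1.trans e2)

lemma not_inf' {V : Type*} (G : SimpleGraph V) (M : V → V → Bool)
    (hM : ∀ u w, G.Adj u w ↔ M u w = true)
    (key : ∀ g : V → Bool,
      ¬ ((∀ u w x : V, g u = true → g w = true → g x = true → u ≠ w → w ≠ x → u ≠ x →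
            M u w = false → M w x = false → M u x = false) ∧
         (∀ u w : V, g u = false → g w = false → u ≠ w → M u w = true))) :
    ¬ InfOnePolar G := by
  classical
  rintro ⟨A, hCM, hCl⟩
  apply key (fun v => decide (v ∈ A))
  constructor
  · intro u w x hu hw hx huw hwx hux h1 h2
    have n1 : ¬ G.Adj u w := fun h => by rw [(hM u w).mp h] at h1; cases h1
    have n2 : ¬ G.Adj w x := fun h => by rw [(hM w x).mp h] at h2; cases h2
    have := hCM (of_decide_eq_true hu) (of_decide_eq_true hw) (of_decide_eq_true hx)
      huw hwx hux n1 n2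
    cases hMux : M u x
    · rfl
    · exact absurd ((hM u x).mpr hMux) this
  · intro u w hu hw huw
    exact (hM u w).mp (hCl (of_decide_eq_false hu) (of_decide_eq_false hw) huw)

lemma min_part' {V : Type*} (G : SimpleGraph V) (M : V → V → Bool)
    (hM : ∀ u w, G.Adj u w ↔ M u w = true)
    (key : ∀ v : V, ∃ a : V → Bool, ∃ f : V → Fin 2,
      (∀ u w : V, u ≠ v → w ≠ v → a u = true → a w = true → (M u w = true ↔ f u ≠ f w)) ∧
      (∀ u w : V, u ≠ v → w ≠ v → a u = false → a w = false → u ≠ w → M u w = true)) :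
    ∀ t : Set V, t ≠ Set.univ → SOnePolar 2 (G.induce t) := by
  intro t ht
  have hv : ∃ v, v ∉ t := by
    by_contra h; push_neg at h; exact ht (Set.eq_univ_iff_forall.mpr h)
  obtain ⟨v, hv⟩ := hv
  obtain ⟨a, f, h1, h2⟩ := key v
  refine ⟨{x : t | a x = true}, ⟨fun u => f u.1, ?_⟩, ?_⟩
  · rintro ⟨⟨u, hu⟩, hau⟩ ⟨⟨w, hw⟩, haw⟩
    simp only [Set.mem_setOf_eq] at hau haw
    have hun : u ≠ v := fun h => hv (h ▸ hu)
    have hwn : w ≠ v := fun h => hv (h ▸ hw)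
    exact (hM u w).trans (h1 u w hun hwn hau haw)
  · rintro ⟨u, hu⟩ hau ⟨w, hw⟩ haw hne
    simp only [Set.mem_compl_iff, Set.mem_setOf_eq, Bool.not_eq_true] at hau haw
    have hun : u ≠ v := fun h => hv (h ▸ hu)
    have hwn : w ≠ v := fun h => hv (h ▸ hw)
    have huw : u ≠ w := fun h => hne (Subtype.ext h)
    exact (hM u w).mpr (h2 u w hun hwn hau haw huw)

lemma pack' {V : Type*} (G : SimpleGraph V) (M : V → V → Bool)
    (hM : ∀ u w, G.Adj u w ↔ M u w = true)
    (key1 : ∀ g : V → Bool,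
      ¬ ((∀ u w x : V, g u = true → g w = true → g x = true → u ≠ w → w ≠ x → u ≠ x →
            M u w = false → M w x = false → M u x = false) ∧
         (∀ u w : V, g u = false → g w = false → u ≠ w → M u w = true)))
    (key2 : ∀ v : V, ∃ a : V → Bool, ∃ f : V → Fin 2,
      (∀ u w : V, u ≠ v → w ≠ v → a u = true → a w = true → (M u w = true ↔ f u ≠ f w)) ∧
      (∀ u w : V, u ≠ v → w ≠ v → a u = false → a w = false → u ≠ w → M u w = true)) :
    (∀ s : ℕ, 2 ≤ s → MinSOnePolarObstruction s G) ∧ MinInfOnePolarObstruction G := by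
  have hni := not_inf' G M hM key1
  have hmp := min_part' G M hM key2
  exact ⟨fun s hs => ⟨fun h => hni (sone_to_inf' G h), fun t ht => sone_mono' _ hs (hmp t ht)⟩,
    hni, fun t ht => sone_to_inf' _ (hmp t ht)⟩

/-! Adjacency matrices -/

def MatE1 : (Fin 1 ⊕ (Fin 2 ⊕ Fin 2)) → (Fin 1 ⊕ (Fin 2 ⊕ Fin 2)) → Bool
  | .inr (.inl a), .inr (.inl b) => a != b
  | .inr (.inr a), .inr (.inr b) => a != b
  | _, _ => false

def pathB {n : ℕ} (a b : Fin n) : Bool := (a.val + 1 == b.val) || (b.val + 1 == a.val)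

def MatE2 : (Fin 3 ⊕ Fin 3) → (Fin 3 ⊕ Fin 3) → Bool
  | .inl a, .inl b => pathB a b
  | .inr a, .inr b => pathB a b
  | _, _ => false

def MatE3 : (Fin 4 ⊕ Fin 2) → (Fin 4 ⊕ Fin 2) → Bool
  | .inl a, .inl b => (a - b == 1) || (b - a == 1)
  | _, _ => false

def MatE7 : (Fin 1 ⊕ (Fin 3 ⊕ Fin 2)) → (Fin 1 ⊕ (Fin 3 ⊕ Fin 2)) → Bool
  | .inr (.inl a), .inr (.inl b) => (a != b) && !(pathB a b)
  | .inr (.inl _), .inr (.inr _) => true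
  | .inr (.inr _), .inr (.inl _) => true
  | _, _ => false

def MatE10 : (Fin 1 ⊕ Fin 5) → (Fin 1 ⊕ Fin 5) → Bool
  | .inr a, .inr b => (a - b == 1) || (b - a == 1)
  | _, _ => false

def bannerB : Fin 5 → Fin 5 → Bool :=
  fun a b => (a == 0 && b == 1) || (a == 1 && b == 0) || (a == 1 && b == 2) ||
    (a == 2 && b == 1) || (a == 2 && b == 3) || (a == 3 && b == 2) ||
    (a == 3 && b == 0) || (a == 0 && b == 3) || (a == 0 && b == 4) || (a == 4 && b == 0)

def MatE11 : (Fin 1 ⊕ Fin 5) → (Fin 1 ⊕ Fin 5) → Bool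
  | .inr a, .inr b => bannerB a b
  | _, _ => false

def MatE12 : (Fin 1 ⊕ Fin 5) → (Fin 1 ⊕ Fin 5) → Bool
  | .inr a, .inr b => (a != b) && !(pathB a b)
  | _, _ => false

lemma hMatE1 : ∀ u w, E1.Adj u w ↔ MatE1 u w = true := by
  rintro (u | u | u) (w | w | w) <;>
    simp [E1, MatE1, KG, bne_iff_ne, Fin.eq_zero]

lemma hMatE2 : ∀ u w, E2.Adj u w ↔ MatE2 u w = true := by
  rintro (u | u) (w | w) <;>
    simp [E2, MatE2, pathB, pathGraph_adj]

lemma hMatE3 : ∀ u w, E3.Adj u w ↔ MatE3 u w = true := by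
  rintro (u | u) (w | w) <;>
    simp [E3, MatE3, EG, cycleGraph_adj]

lemma hMatE7 : ∀ u w, E7.Adj u w ↔ MatE7 u w = true := by
  rintro (u | u | u) (w | w | w) <;>
    simp [E7, MatE7, KG, pathB, pathGraph_adj, compl_adj, Fin.eq_zero,
      bne_iff_ne, Bool.not_eq_true]

lemma hMatE10 : ∀ u w, E10.Adj u w ↔ MatE10 u w = true := by
  rintro (u | u) (w | w) <;>
    simp [E10, MatE10, KG, cycleGraph_adj, Fin.eq_zero]

lemma hbanner : ∀ u w : Fin 5, banner.Adj u w ↔ bannerB u w = true := by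
  intro u w
  fin_cases u <;> fin_cases w <;>
    simp [banner, bannerB]

lemma hMatE11 : ∀ u w, E11.Adj u w ↔ MatE11 u w = true := by
  rintro (u | u) (w | w) <;>
    simp [E11, MatE11, KG, Fin.eq_zero, hbanner]

lemma hMatE12 : ∀ u w, E12.Adj u w ↔ MatE12 u w = true := by
  rintro (u | u) (w | w) <;>
    simp [E12, MatE12, KG, pathB, pathGraph_adj, compl_adj, Fin.eq_zero,
      bne_iff_ne, Bool.not_eq_true]

set_option synthInstance.maxSize 4000
set_option synthInstance.maxHeartbeats 4000000

set_option maxRecDepth 200000 in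
set_option maxHeartbeats 1600000 in
lemma key1_E1 : ∀ g : (Fin 1 ⊕ (Fin 2 ⊕ Fin 2)) → Bool,
      ¬ ((∀ u w x : (Fin 1 ⊕ (Fin 2 ⊕ Fin 2)), g u = true → g w = true → g x = true → u ≠ w → w ≠ x → u ≠ x →
            MatE1 u w = false → MatE1 w x = false → MatE1 u x = false) ∧
         (∀ u w : (Fin 1 ⊕ (Fin 2 ⊕ Fin 2)), g u = false → g w = false → u ≠ w → MatE1 u w = true)) := by decide

set_option maxRecDepth 200000 in
set_option maxHeartbeats 1600000 in
lemma key2_E1 : ∀ v : (Fin 1 ⊕ (Fin 2 ⊕ Fin 2)), ∃ a : (Fin 1 ⊕ (Fin 2 ⊕ Fin 2)) → Bool, ∃ f : (Fin 1 ⊕ (Fin 2 ⊕ Fin 2)) → Fin 2,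
      (∀ u w : (Fin 1 ⊕ (Fin 2 ⊕ Fin 2)), u ≠ v → w ≠ v → a u = true → a w = true → (MatE1 u w = true ↔ f u ≠ f w)) ∧
      (∀ u w : (Fin 1 ⊕ (Fin 2 ⊕ Fin 2)), u ≠ v → w ≠ v → a u = false → a w = false → u ≠ w → MatE1 u w = true) := by
  intro v
  fin_cases v
  · exact ⟨Sum.elim ![false] (Sum.elim ![false, false] ![true, true]), Sum.elim ![(0 : Fin 2)] (Sum.elim ![(0 : Fin 2), (0 : Fin 2)] ![(0 : Fin 2), (1 : Fin 2)]), by decide, by decide⟩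
  · exact ⟨Sum.elim ![true] (Sum.elim ![false, true] ![false, false]), Sum.elim ![(0 : Fin 2)] (Sum.elim ![(0 : Fin 2), (0 : Fin 2)] ![(0 : Fin 2), (0 : Fin 2)]), by decide, by decide⟩
  · exact ⟨Sum.elim ![true] (Sum.elim ![true, false] ![false, false]), Sum.elim ![(0 : Fin 2)] (Sum.elim ![(0 : Fin 2), (0 : Fin 2)] ![(0 : Fin 2), (0 : Fin 2)]), by decide, by decide⟩
  · exact ⟨Sum.elim ![true] (Sum.elim ![false, false] ![false, true]), Sum.elim ![(0 : Fin 2)] (Sum.elim ![(0 : Fin 2), (0 : Fin 2)] ![(0 : Fin 2), (0 : Fin 2)]), by decide, by decide⟩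
  · exact ⟨Sum.elim ![true] (Sum.elim ![false, false] ![true, false]), Sum.elim ![(0 : Fin 2)] (Sum.elim ![(0 : Fin 2), (0 : Fin 2)] ![(0 : Fin 2), (0 : Fin 2)]), by decide, by decide⟩

lemma pack_E1 : (∀ s : ℕ, 2 ≤ s → MinSOnePolarObstruction s E1) ∧
    MinInfOnePolarObstruction E1 :=
  pack' E1 MatE1 hMatE1 key1_E1 key2_E1

set_option maxRecDepth 200000 in
set_option maxHeartbeats 1600000 in
lemma key1_E2 : ∀ g : (Fin 3 ⊕ Fin 3) → Bool,
      ¬ ((∀ u w x : (Fin 3 ⊕ Fin 3), g u = true → g w = true → g x = true → u ≠ w → w ≠ x → u ≠ x →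
            MatE2 u w = false → MatE2 w x = false → MatE2 u x = false) ∧
         (∀ u w : (Fin 3 ⊕ Fin 3), g u = false → g w = false → u ≠ w → MatE2 u w = true)) := by decide

set_option maxRecDepth 200000 in
set_option maxHeartbeats 1600000 in
lemma key2_E2 : ∀ v : (Fin 3 ⊕ Fin 3), ∃ a : (Fin 3 ⊕ Fin 3) → Bool, ∃ f : (Fin 3 ⊕ Fin 3) → Fin 2,
      (∀ u w : (Fin 3 ⊕ Fin 3), u ≠ v → w ≠ v → a u = true → a w = true → (MatE2 u w = true ↔ f u ≠ f w)) ∧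
      (∀ u w : (Fin 3 ⊕ Fin 3), u ≠ v → w ≠ v → a u = false → a w = false → u ≠ w → MatE2 u w = true) := by
  intro v
  fin_cases v
  · exact ⟨Sum.elim ![false, false, false] ![true, true, true], Sum.elim ![(0 : Fin 2), (0 : Fin 2), (0 : Fin 2)] ![(0 : Fin 2), (1 : Fin 2), (0 : Fin 2)], by decide, by decide⟩
  · exact ⟨Sum.elim ![true, false, true] ![false, false, true], Sum.elim ![(0 : Fin 2), (0 : Fin 2), (0 : Fin 2)] ![(0 : Fin 2), (0 : Fin 2), (0 : Fin 2)], by decide, by decide⟩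
  · exact ⟨Sum.elim ![false, false, false] ![true, true, true], Sum.elim ![(0 : Fin 2), (0 : Fin 2), (0 : Fin 2)] ![(0 : Fin 2), (1 : Fin 2), (0 : Fin 2)], by decide, by decide⟩
  · exact ⟨Sum.elim ![true, true, true] ![false, false, false], Sum.elim ![(0 : Fin 2), (1 : Fin 2), (0 : Fin 2)] ![(0 : Fin 2), (0 : Fin 2), (0 : Fin 2)], by decide, by decide⟩
  · exact ⟨Sum.elim ![false, false, true] ![true, false, true], Sum.elim ![(0 : Fin 2), (0 : Fin 2), (0 : Fin 2)] ![(0 : Fin 2), (0 : Fin 2), (0 : Fin 2)], by decide, by decide⟩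
  · exact ⟨Sum.elim ![true, true, true] ![false, false, false], Sum.elim ![(0 : Fin 2), (1 : Fin 2), (0 : Fin 2)] ![(0 : Fin 2), (0 : Fin 2), (0 : Fin 2)], by decide, by decide⟩

lemma pack_E2 : (∀ s : ℕ, 2 ≤ s → MinSOnePolarObstruction s E2) ∧
    MinInfOnePolarObstruction E2 :=
  pack' E2 MatE2 hMatE2 key1_E2 key2_E2

set_option maxRecDepth 200000 in
set_option maxHeartbeats 1600000 in
lemma key1_E3 : ∀ g : (Fin 4 ⊕ Fin 2) → Bool,
      ¬ ((∀ u w x : (Fin 4 ⊕ Fin 2), g u = true → g w = true → g x = true → u ≠ w → w ≠ x → u ≠ x →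
            MatE3 u w = false → MatE3 w x = false → MatE3 u x = false) ∧
         (∀ u w : (Fin 4 ⊕ Fin 2), g u = false → g w = false → u ≠ w → MatE3 u w = true)) := by decide

set_option maxRecDepth 200000 in
set_option maxHeartbeats 1600000 in
lemma key2_E3 : ∀ v : (Fin 4 ⊕ Fin 2), ∃ a : (Fin 4 ⊕ Fin 2) → Bool, ∃ f : (Fin 4 ⊕ Fin 2) → Fin 2,
      (∀ u w : (Fin 4 ⊕ Fin 2), u ≠ v → w ≠ v → a u = true → a w = true → (MatE3 u w = true ↔ f u ≠ f w)) ∧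
      (∀ u w : (Fin 4 ⊕ Fin 2), u ≠ v → w ≠ v → a u = false → a w = false → u ≠ w → MatE3 u w = true) := by
  intro v
  fin_cases v
  · exact ⟨Sum.elim ![false, false, false, true] ![true, true], Sum.elim ![(0 : Fin 2), (0 : Fin 2), (0 : Fin 2), (0 : Fin 2)] ![(0 : Fin 2), (0 : Fin 2)], by decide, by decide⟩
  · exact ⟨Sum.elim ![false, false, true, false] ![true, true], Sum.elim ![(0 : Fin 2), (0 : Fin 2), (0 : Fin 2), (0 : Fin 2)] ![(0 : Fin 2), (0 : Fin 2)], by decide, by decide⟩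
  · exact ⟨Sum.elim ![false, false, false, true] ![true, true], Sum.elim ![(0 : Fin 2), (0 : Fin 2), (0 : Fin 2), (0 : Fin 2)] ![(0 : Fin 2), (0 : Fin 2)], by decide, by decide⟩
  · exact ⟨Sum.elim ![false, false, true, false] ![true, true], Sum.elim ![(0 : Fin 2), (0 : Fin 2), (0 : Fin 2), (0 : Fin 2)] ![(0 : Fin 2), (0 : Fin 2)], by decide, by decide⟩
  · exact ⟨Sum.elim ![true, true, true, true] ![false, false], Sum.elim ![(0 : Fin 2), (1 : Fin 2), (0 : Fin 2), (1 : Fin 2)] ![(0 : Fin 2), (0 : Fin 2)], by decide, by decide⟩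
  · exact ⟨Sum.elim ![true, true, true, true] ![false, false], Sum.elim ![(0 : Fin 2), (1 : Fin 2), (0 : Fin 2), (1 : Fin 2)] ![(0 : Fin 2), (0 : Fin 2)], by decide, by decide⟩

lemma pack_E3 : (∀ s : ℕ, 2 ≤ s → MinSOnePolarObstruction s E3) ∧
    MinInfOnePolarObstruction E3 :=
  pack' E3 MatE3 hMatE3 key1_E3 key2_E3

set_option maxRecDepth 200000 in
set_option maxHeartbeats 1600000 in
lemma key1_E7 : ∀ g : (Fin 1 ⊕ (Fin 3 ⊕ Fin 2)) → Bool,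
      ¬ ((∀ u w x : (Fin 1 ⊕ (Fin 3 ⊕ Fin 2)), g u = true → g w = true → g x = true → u ≠ w → w ≠ x → u ≠ x →
            MatE7 u w = false → MatE7 w x = false → MatE7 u x = false) ∧
         (∀ u w : (Fin 1 ⊕ (Fin 3 ⊕ Fin 2)), g u = false → g w = false → u ≠ w → MatE7 u w = true)) := by decide

set_option maxRecDepth 200000 in
set_option maxHeartbeats 1600000 in
lemma key2_E7 : ∀ v : (Fin 1 ⊕ (Fin 3 ⊕ Fin 2)), ∃ a : (Fin 1 ⊕ (Fin 3 ⊕ Fin 2)) → Bool, ∃ f : (Fin 1 ⊕ (Fin 3 ⊕ Fin 2)) → Fin 2,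
      (∀ u w : (Fin 1 ⊕ (Fin 3 ⊕ Fin 2)), u ≠ v → w ≠ v → a u = true → a w = true → (MatE7 u w = true ↔ f u ≠ f w)) ∧
      (∀ u w : (Fin 1 ⊕ (Fin 3 ⊕ Fin 2)), u ≠ v → w ≠ v → a u = false → a w = false → u ≠ w → MatE7 u w = true) := by
  intro v
  fin_cases v
  · exact ⟨Sum.elim ![false] (Sum.elim ![false, true, false] ![false, true]), Sum.elim ![(0 : Fin 2)] (Sum.elim ![(0 : Fin 2), (0 : Fin 2), (0 : Fin 2)] ![(0 : Fin 2), (1 : Fin 2)]), by decide, by decide⟩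
  · exact ⟨Sum.elim ![false] (Sum.elim ![false, true, true] ![true, true]), Sum.elim ![(0 : Fin 2)] (Sum.elim ![(0 : Fin 2), (0 : Fin 2), (0 : Fin 2)] ![(1 : Fin 2), (1 : Fin 2)]), by decide, by decide⟩
  · exact ⟨Sum.elim ![true] (Sum.elim ![false, false, false] ![false, true]), Sum.elim ![(0 : Fin 2)] (Sum.elim ![(0 : Fin 2), (0 : Fin 2), (0 : Fin 2)] ![(0 : Fin 2), (0 : Fin 2)]), by decide, by decide⟩
  · exact ⟨Sum.elim ![false] (Sum.elim ![true, true, false] ![true, true]), Sum.elim ![(0 : Fin 2)] (Sum.elim ![(0 : Fin 2), (0 : Fin 2), (0 : Fin 2)] ![(1 : Fin 2), (1 : Fin 2)]), by decide, by decide⟩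
  · exact ⟨Sum.elim ![true] (Sum.elim ![false, true, false] ![false, false]), Sum.elim ![(0 : Fin 2)] (Sum.elim ![(0 : Fin 2), (0 : Fin 2), (0 : Fin 2)] ![(0 : Fin 2), (0 : Fin 2)]), by decide, by decide⟩
  · exact ⟨Sum.elim ![true] (Sum.elim ![false, true, false] ![false, false]), Sum.elim ![(0 : Fin 2)] (Sum.elim ![(0 : Fin 2), (0 : Fin 2), (0 : Fin 2)] ![(0 : Fin 2), (0 : Fin 2)]), by decide, by decide⟩

lemma pack_E7 : (∀ s : ℕ, 2 ≤ s → MinSOnePolarObstruction s E7) ∧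
    MinInfOnePolarObstruction E7 :=
  pack' E7 MatE7 hMatE7 key1_E7 key2_E7

set_option maxRecDepth 200000 in
set_option maxHeartbeats 1600000 in
lemma key1_E10 : ∀ g : (Fin 1 ⊕ Fin 5) → Bool,
      ¬ ((∀ u w x : (Fin 1 ⊕ Fin 5), g u = true → g w = true → g x = true → u ≠ w → w ≠ x → u ≠ x →
            MatE10 u w = false → MatE10 w x = false → MatE10 u x = false) ∧
         (∀ u w : (Fin 1 ⊕ Fin 5), g u = false → g w = false → u ≠ w → MatE10 u w = true)) := by decide

set_option maxRecDepth 200000 in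
set_option maxHeartbeats 1600000 in
lemma key2_E10 : ∀ v : (Fin 1 ⊕ Fin 5), ∃ a : (Fin 1 ⊕ Fin 5) → Bool, ∃ f : (Fin 1 ⊕ Fin 5) → Fin 2,
      (∀ u w : (Fin 1 ⊕ Fin 5), u ≠ v → w ≠ v → a u = true → a w = true → (MatE10 u w = true ↔ f u ≠ f w)) ∧
      (∀ u w : (Fin 1 ⊕ Fin 5), u ≠ v → w ≠ v → a u = false → a w = false → u ≠ w → MatE10 u w = true) := by
  intro v
  fin_cases v
  · exact ⟨Sum.elim ![false] ![false, false, true, true, true], Sum.elim ![(0 : Fin 2)] ![(0 : Fin 2), (0 : Fin 2), (0 : Fin 2), (1 : Fin 2), (0 : Fin 2)], by decide, by decide⟩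
  · exact ⟨Sum.elim ![true] ![false, true, false, false, true], Sum.elim ![(0 : Fin 2)] ![(0 : Fin 2), (0 : Fin 2), (0 : Fin 2), (0 : Fin 2), (0 : Fin 2)], by decide, by decide⟩
  · exact ⟨Sum.elim ![true] ![true, false, true, false, false], Sum.elim ![(0 : Fin 2)] ![(0 : Fin 2), (0 : Fin 2), (0 : Fin 2), (0 : Fin 2), (0 : Fin 2)], by decide, by decide⟩
  · exact ⟨Sum.elim ![true] ![false, true, false, true, false], Sum.elim ![(0 : Fin 2)] ![(0 : Fin 2), (0 : Fin 2), (0 : Fin 2), (0 : Fin 2), (0 : Fin 2)], by decide, by decide⟩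
  · exact ⟨Sum.elim ![true] ![false, false, true, false, true], Sum.elim ![(0 : Fin 2)] ![(0 : Fin 2), (0 : Fin 2), (0 : Fin 2), (0 : Fin 2), (0 : Fin 2)], by decide, by decide⟩
  · exact ⟨Sum.elim ![true] ![true, false, false, true, false], Sum.elim ![(0 : Fin 2)] ![(0 : Fin 2), (0 : Fin 2), (0 : Fin 2), (0 : Fin 2), (0 : Fin 2)], by decide, by decide⟩

lemma pack_E10 : (∀ s : ℕ, 2 ≤ s → MinSOnePolarObstruction s E10) ∧
    MinInfOnePolarObstruction E10 :=
  pack' E10 MatE10 hMatE10 key1_E10 key2_E10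

set_option maxRecDepth 200000 in
set_option maxHeartbeats 1600000 in
lemma key1_E11 : ∀ g : (Fin 1 ⊕ Fin 5) → Bool,
      ¬ ((∀ u w x : (Fin 1 ⊕ Fin 5), g u = true → g w = true → g x = true → u ≠ w → w ≠ x → u ≠ x →
            MatE11 u w = false → MatE11 w x = false → MatE11 u x = false) ∧
         (∀ u w : (Fin 1 ⊕ Fin 5), g u = false → g w = false → u ≠ w → MatE11 u w = true)) := by decide

set_option maxRecDepth 200000 in
set_option maxHeartbeats 1600000 in
lemma key2_E11 : ∀ v : (Fin 1 ⊕ Fin 5), ∃ a : (Fin 1 ⊕ Fin 5) → Bool, ∃ f : (Fin 1 ⊕ Fin 5) → Fin 2,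
      (∀ u w : (Fin 1 ⊕ Fin 5), u ≠ v → w ≠ v → a u = true → a w = true → (MatE11 u w = true ↔ f u ≠ f w)) ∧
      (∀ u w : (Fin 1 ⊕ Fin 5), u ≠ v → w ≠ v → a u = false → a w = false → u ≠ w → MatE11 u w = true) := by
  intro v
  fin_cases v
  · exact ⟨Sum.elim ![false] ![false, true, true, true, false], Sum.elim ![(0 : Fin 2)] ![(0 : Fin 2), (0 : Fin 2), (1 : Fin 2), (0 : Fin 2), (0 : Fin 2)], by decide, by decide⟩
  · exact ⟨Sum.elim ![true] ![false, false, false, true, true], Sum.elim ![(0 : Fin 2)] ![(0 : Fin 2), (0 : Fin 2), (0 : Fin 2), (0 : Fin 2), (0 : Fin 2)], by decide, by decide⟩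
  · exact ⟨Sum.elim ![true] ![false, false, true, false, true], Sum.elim ![(0 : Fin 2)] ![(0 : Fin 2), (0 : Fin 2), (0 : Fin 2), (0 : Fin 2), (0 : Fin 2)], by decide, by decide⟩
  · exact ⟨Sum.elim ![false] ![true, true, false, true, true], Sum.elim ![(0 : Fin 2)] ![(0 : Fin 2), (1 : Fin 2), (0 : Fin 2), (1 : Fin 2), (1 : Fin 2)], by decide, by decide⟩
  · exact ⟨Sum.elim ![true] ![false, false, true, false, true], Sum.elim ![(0 : Fin 2)] ![(0 : Fin 2), (0 : Fin 2), (0 : Fin 2), (0 : Fin 2), (0 : Fin 2)], by decide, by decide⟩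
  · exact ⟨Sum.elim ![false] ![true, true, true, true, false], Sum.elim ![(0 : Fin 2)] ![(0 : Fin 2), (1 : Fin 2), (0 : Fin 2), (1 : Fin 2), (0 : Fin 2)], by decide, by decide⟩

lemma pack_E11 : (∀ s : ℕ, 2 ≤ s → MinSOnePolarObstruction s E11) ∧
    MinInfOnePolarObstruction E11 :=
  pack' E11 MatE11 hMatE11 key1_E11 key2_E11

set_option maxRecDepth 200000 in
set_option maxHeartbeats 1600000 in
lemma key1_E12 : ∀ g : (Fin 1 ⊕ Fin 5) → Bool,
      ¬ ((∀ u w x : (Fin 1 ⊕ Fin 5), g u = true → g w = true → g x = true → u ≠ w → w ≠ x → u ≠ x →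
            MatE12 u w = false → MatE12 w x = false → MatE12 u x = false) ∧
         (∀ u w : (Fin 1 ⊕ Fin 5), g u = false → g w = false → u ≠ w → MatE12 u w = true)) := by decide

set_option maxRecDepth 200000 in
set_option maxHeartbeats 1600000 in
lemma key2_E12 : ∀ v : (Fin 1 ⊕ Fin 5), ∃ a : (Fin 1 ⊕ Fin 5) → Bool, ∃ f : (Fin 1 ⊕ Fin 5) → Fin 2,
      (∀ u w : (Fin 1 ⊕ Fin 5), u ≠ v → w ≠ v → a u = true → a w = true → (MatE12 u w = true ↔ f u ≠ f w)) ∧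
      (∀ u w : (Fin 1 ⊕ Fin 5), u ≠ v → w ≠ v → a u = false → a w = false → u ≠ w → MatE12 u w = true) := by
  intro v
  fin_cases v
  · exact ⟨Sum.elim ![false] ![false, true, false, true, false], Sum.elim ![(0 : Fin 2)] ![(0 : Fin 2), (0 : Fin 2), (0 : Fin 2), (1 : Fin 2), (0 : Fin 2)], by decide, by decide⟩
  · exact ⟨Sum.elim ![true] ![false, false, true, true, false], Sum.elim ![(0 : Fin 2)] ![(0 : Fin 2), (0 : Fin 2), (0 : Fin 2), (0 : Fin 2), (0 : Fin 2)], by decide, by decide⟩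
  · exact ⟨Sum.elim ![true] ![false, false, false, true, false], Sum.elim ![(0 : Fin 2)] ![(0 : Fin 2), (0 : Fin 2), (0 : Fin 2), (0 : Fin 2), (0 : Fin 2)], by decide, by decide⟩
  · exact ⟨Sum.elim ![false] ![true, true, false, true, true], Sum.elim ![(0 : Fin 2)] ![(0 : Fin 2), (0 : Fin 2), (0 : Fin 2), (1 : Fin 2), (1 : Fin 2)], by decide, by decide⟩
  · exact ⟨Sum.elim ![true] ![false, true, false, false, false], Sum.elim ![(0 : Fin 2)] ![(0 : Fin 2), (0 : Fin 2), (0 : Fin 2), (0 : Fin 2), (0 : Fin 2)], by decide, by decide⟩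
  · exact ⟨Sum.elim ![true] ![false, true, true, false, false], Sum.elim ![(0 : Fin 2)] ![(0 : Fin 2), (0 : Fin 2), (0 : Fin 2), (0 : Fin 2), (0 : Fin 2)], by decide, by decide⟩

lemma pack_E12 : (∀ s : ℕ, 2 ≤ s → MinSOnePolarObstruction s E12) ∧
    MinInfOnePolarObstruction E12 :=
  pack' E12 MatE12 hMatE12 key1_E12 key2_E12

end Aux
/-- For every integer `s ≥ 2`, each of `E1, E2, E3, E7, E10, E11, E12` is a
minimal `(s,1)`-polar obstruction; consequently, each is a minimal `(∞,1)`-polar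
obstruction. -/
theorem stmt_6 :
    (∀ s : ℕ, 2 ≤ s →
      (MinSOnePolarObstruction s E1 ∧
        MinSOnePolarObstruction s E2 ∧
        MinSOnePolarObstruction s E3 ∧
        MinSOnePolarObstruction s E7 ∧
        MinSOnePolarObstruction s E10 ∧
        MinSOnePolarObstruction s E11 ∧
        MinSOnePolarObstruction s E12)) ∧
    (MinInfOnePolarObstruction E1 ∧
      MinInfOnePolarObstruction E2 ∧
      MinInfOnePolarObstruction E3 ∧
      MinInfOnePolarObstruction E7 ∧
      MinInfOnePolarObstruction E10 ∧
      MinInfOnePolarObstruction E11 ∧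
      MinInfOnePolarObstruction E12) := by
  exact ⟨fun s hs => ⟨pack_E1.1 s hs, pack_E2.1 s hs, pack_E3.1 s hs, pack_E7.1 s hs,
      pack_E10.1 s hs, pack_E11.1 s hs, pack_E12.1 s hs⟩,
    pack_E1.2, pack_E2.2, pack_E3.2, pack_E7.2, pack_E10.2, pack_E11.2, pack_E12.2⟩
end

section
/- Let s ≥ 2 be an integer. Every minimal (s,1)-polar obstruction different from K_1 + 2K_2 and from 2K_1 + C_4 has at most two connected components. -/
open SimpleGraph

universe u v

/-! ### Auxiliary lemmas for stmt_7 -/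

private lemma extract_polar' {V : Type u} {G : SimpleGraph V} {s : ℕ} {t : Set V}
    (h : SOnePolar s (G.induce t)) :
    ∃ A : Set V, A ⊆ t ∧
      (∀ ⦃u w x : V⦄, u ∈ A → w ∈ A → x ∈ A → ¬ G.Adj u w → ¬ G.Adj w x → ¬ G.Adj u x) ∧
      G.IsClique (t \ A) := by
  obtain ⟨A0, ⟨f, hf⟩, hcl⟩ := h
  refine ⟨Subtype.val '' A0, by rintro x ⟨x0, _, rfl⟩; exact x0.2, ?_, ?_⟩
  · rintro u w x ⟨u0, hu0, rfl⟩ ⟨w0, hw0, rfl⟩ ⟨x0, hx0, rfl⟩ huw hwx hux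
    have h1 : f ⟨u0, hu0⟩ = f ⟨w0, hw0⟩ := by
      by_contra hne
      exact huw ((hf ⟨u0, hu0⟩ ⟨w0, hw0⟩).2 hne)
    have h2 : f ⟨w0, hw0⟩ = f ⟨x0, hx0⟩ := by
      by_contra hne
      exact hwx ((hf ⟨w0, hw0⟩ ⟨x0, hx0⟩).2 hne)
    exact (hf ⟨u0, hu0⟩ ⟨x0, hx0⟩).1 hux (h1.trans h2)
  · intro x hx y hy hxy
    have hx0 : (⟨x, hx.1⟩ : t) ∈ A0ᶜ := fun hmem => hx.2 ⟨⟨x, hx.1⟩, hmem, rfl⟩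
    have hy0 : (⟨y, hy.1⟩ : t) ∈ A0ᶜ := fun hmem => hy.2 ⟨⟨y, hy.1⟩, hmem, rfl⟩
    exact hcl hx0 hy0 (fun hh => hxy (congrArg Subtype.val hh))

private lemma iso_E1' {V : Type u} (G : SimpleGraph V) (a b c d v : V)
    (huniv : ∀ x : V, x = a ∨ x = b ∨ x = c ∨ x = d ∨ x = v)
    (hac : a ≠ c) (had : a ≠ d) (hbc : b ≠ c) (hbd : b ≠ d)
    (hav : a ≠ v) (hbv : b ≠ v) (hcv : c ≠ v) (hdv : d ≠ v)
    (eab : G.Adj a b) (ecd : G.Adj c d)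
    (nac : ¬ G.Adj a c) (nad : ¬ G.Adj a d) (nbc : ¬ G.Adj b c) (nbd : ¬ G.Adj b d)
    (nav : ¬ G.Adj a v) (nbv : ¬ G.Adj b v) (ncv : ¬ G.Adj c v) (ndv : ¬ G.Adj d v) :
    Nonempty (G ≃g E1) := by
  have hab : a ≠ b := eab.ne
  have hcd : c ≠ d := ecd.ne
  have eba := eab.symm; have edc := ecd.symm
  have nca : ¬ G.Adj c a := fun h => nac h.symm
  have nda : ¬ G.Adj d a := fun h => nad h.symm
  have ncb : ¬ G.Adj c b := fun h => nbc h.symm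
  have ndb : ¬ G.Adj d b := fun h => nbd h.symm
  have nva : ¬ G.Adj v a := fun h => nav h.symm
  have nvb : ¬ G.Adj v b := fun h => nbv h.symm
  have nvc : ¬ G.Adj v c := fun h => ncv h.symm
  have nvd : ¬ G.Adj v d := fun h => ndv h.symm
  let g : (Fin 1 ⊕ (Fin 2 ⊕ Fin 2)) → V := fun x =>
    match x with
    | .inl _ => v
    | .inr (.inl ⟨0, _⟩) => a
    | .inr (.inl ⟨_ + 1, _⟩) => b
    | .inr (.inr ⟨0, _⟩) => c
    | .inr (.inr ⟨_ + 1, _⟩) => d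
  have hinj : Function.Injective g := by
    intro x y hxy
    rcases x with x | x | x <;> rcases y with y | y | y <;>
      fin_cases x <;> try fin_cases y
    all_goals simp_all [g]
  have hsurj : Function.Surjective g := by
    intro y
    rcases huniv y with rfl | rfl | rfl | rfl | rfl
    · exact ⟨.inr (.inl 0), rfl⟩
    · exact ⟨.inr (.inl 1), rfl⟩
    · exact ⟨.inr (.inr 0), rfl⟩
    · exact ⟨.inr (.inr 1), rfl⟩
    · exact ⟨.inl 0, rfl⟩
  refine ⟨(SimpleGraph.Iso.symm ⟨Equiv.ofBijective g ⟨hinj, hsurj⟩, ?_⟩ : G ≃g E1)⟩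
  intro x y
  show G.Adj (g x) (g y) ↔ (E1).Adj x y
  rcases x with x | x | x <;> rcases y with y | y | y <;>
    fin_cases x <;> try fin_cases y
  all_goals
    simp_all [g, E1, KG, SimpleGraph.sum_adj]

private lemma iso_E3' {V : Type u} (G : SimpleGraph V) (a b c d v₁ v₂ : V)
    (huniv : ∀ x : V, x = a ∨ x = b ∨ x = c ∨ x = d ∨ x = v₁ ∨ x = v₂)
    (hab : a ≠ b) (hcd : c ≠ d) (hv : v₁ ≠ v₂)
    (hav1 : a ≠ v₁) (hbv1 : b ≠ v₁) (hcv1 : c ≠ v₁) (hdv1 : d ≠ v₁)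
    (hav2 : a ≠ v₂) (hbv2 : b ≠ v₂) (hcv2 : c ≠ v₂) (hdv2 : d ≠ v₂)
    (eac : G.Adj a c) (ead : G.Adj a d) (ebc : G.Adj b c) (ebd : G.Adj b d)
    (nab : ¬ G.Adj a b) (ncd : ¬ G.Adj c d)
    (hv1 : ∀ w, ¬ G.Adj v₁ w) (hv2 : ∀ w, ¬ G.Adj v₂ w) :
    Nonempty (G ≃g E3) := by
  have eca := eac.symm; have eda := ead.symm; have ecb := ebc.symm; have edb := ebd.symm
  have nba : ¬ G.Adj b a := fun h => nab h.symm
  have ndc : ¬ G.Adj d c := fun h => ncd h.symm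
  have nav1 : ¬ G.Adj a v₁ := fun h => hv1 a h.symm
  have nbv1 : ¬ G.Adj b v₁ := fun h => hv1 b h.symm
  have ncv1 : ¬ G.Adj c v₁ := fun h => hv1 c h.symm
  have ndv1 : ¬ G.Adj d v₁ := fun h => hv1 d h.symm
  have nav2 : ¬ G.Adj a v₂ := fun h => hv2 a h.symm
  have nbv2 : ¬ G.Adj b v₂ := fun h => hv2 b h.symm
  have ncv2 : ¬ G.Adj c v₂ := fun h => hv2 c h.symm
  have ndv2 : ¬ G.Adj d v₂ := fun h => hv2 d h.symm
  have nv1a := hv1 a; have nv1b := hv1 b; have nv1c := hv1 c; have nv1d := hv1 d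
  have nv2a := hv2 a; have nv2b := hv2 b; have nv2c := hv2 c; have nv2d := hv2 d
  have nv12 := hv1 v₂; have nv21 := hv2 v₁
  have hac : a ≠ c := eac.ne
  have had : a ≠ d := ead.ne
  have hbc : b ≠ c := ebc.ne
  have hbd : b ≠ d := ebd.ne
  -- cycle order: a, c, b, d
  let g : (Fin 4 ⊕ Fin 2) → V := fun x =>
    match x with
    | .inl ⟨0, _⟩ => a
    | .inl ⟨1, _⟩ => c
    | .inl ⟨2, _⟩ => b
    | .inl ⟨_ + 3, _⟩ => d
    | .inr ⟨0, _⟩ => v₁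
    | .inr ⟨_ + 1, _⟩ => v₂
  have hinj : Function.Injective g := by
    intro x y hxy
    rcases x with x | x <;> rcases y with y | y <;>
      fin_cases x <;> try fin_cases y
    all_goals simp_all [g]
  have hsurj : Function.Surjective g := by
    intro y
    rcases huniv y with rfl | rfl | rfl | rfl | rfl | rfl
    · exact ⟨.inl 0, rfl⟩
    · exact ⟨.inl 2, rfl⟩
    · exact ⟨.inl 1, rfl⟩
    · exact ⟨.inl 3, rfl⟩
    · exact ⟨.inr 0, rfl⟩
    · exact ⟨.inr 1, rfl⟩
  refine ⟨(SimpleGraph.Iso.symm ⟨Equiv.ofBijective g ⟨hinj, hsurj⟩, ?_⟩ : G ≃g E3)⟩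
  intro x y
  show G.Adj (g x) (g y) ↔ (E3).Adj x y
  rcases x with x | x <;> rcases y with y | y <;>
    fin_cases x <;> try fin_cases y
  all_goals
    simp_all [g, E3, EG, SimpleGraph.sum_adj, SimpleGraph.cycleGraph_adj]
  all_goals decide


/-- For `s ≥ 2`, every minimal `(s,1)`-polar obstruction different from
`K_1 + 2K_2` and from `2K_1 + C_4` has at most two connected components. -/
theorem stmt_7 {V : Type*} [Fintype V] (s : ℕ) (hs : 2 ≤ s) (G : SimpleGraph V)
    (hG : MinSOnePolarObstruction s G)
    (h1 : ¬ Nonempty (G ≃g E1)) (h2 : ¬ Nonempty (G ≃g E3)) :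
    ∀ c₁ c₂ c₃ : G.ConnectedComponent, c₁ = c₂ ∨ c₁ = c₃ ∨ c₂ = c₃ := by
  intro c₁ c₂ c₃
  by_contra hcon
  push_neg at hcon
  obtain ⟨hc12, hc13, hc23⟩ := hcon
  obtain ⟨x₁, hx₁⟩ := Quot.exists_rep c₁
  obtain ⟨x₂, hx₂⟩ := Quot.exists_rep c₂
  obtain ⟨x₃, hx₃⟩ := Quot.exists_rep c₃
  have hr12 : ¬ G.Reachable x₁ x₂ := fun h => hc12 (hx₁ ▸ hx₂ ▸ ConnectedComponent.sound h)
  have hr13 : ¬ G.Reachable x₁ x₃ := fun h => hc13 (hx₁ ▸ hx₃ ▸ ConnectedComponent.sound h)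
  have hr23 : ¬ G.Reachable x₂ x₃ := fun h => hc23 (hx₂ ▸ hx₃ ▸ ConnectedComponent.sound h)
  -- split graphs are (s,1)-polar
  have hsplit : ∀ A : Set V, _root_.IsIndepSet G A → ¬ G.IsClique Aᶜ := by
    intro A hA hC
    refine hG.1 ⟨A, ⟨fun _ => ⟨0, by omega⟩, fun u w => ?_⟩, hC⟩
    simp [hA u.2 w.2]
  -- G has an edge
  obtain ⟨a₀, b₀, hedge⟩ : ∃ a b, G.Adj a b := by
    by_contra h
    push_neg at h
    refine hG.1 ⟨Set.univ, ⟨fun _ => ⟨0, by omega⟩, fun u w => ?_⟩, by simp⟩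
    simp [h]
  clear hedge a₀ b₀
  by_cases hcase : ∃ a b c d, G.Adj a b ∧ G.Adj c d ∧ ¬ G.Reachable a c
  · -- two edges in different components
    obtain ⟨a, b, c, d, eab, ecd, hrac⟩ := hcase
    have hrbc : ¬ G.Reachable b c := fun h => hrac (eab.reachable.trans h)
    have hrad : ¬ G.Reachable a d := fun h => hrac (h.trans ecd.reachable.symm)
    have hrbd : ¬ G.Reachable b d := fun h => hrbc (h.trans ecd.reachable.symm)
    -- find v in a third component
    obtain ⟨v, hva, hvc⟩ : ∃ v, ¬ G.Reachable v a ∧ ¬ G.Reachable v c := by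
      by_contra h
      push_neg at h
      have g1 : G.Reachable x₁ a ∨ G.Reachable x₁ c := by
        by_cases hh : G.Reachable x₁ a
        · exact Or.inl hh
        · exact Or.inr (h x₁ hh)
      have g2 : G.Reachable x₂ a ∨ G.Reachable x₂ c := by
        by_cases hh : G.Reachable x₂ a
        · exact Or.inl hh
        · exact Or.inr (h x₂ hh)
      have g3 : G.Reachable x₃ a ∨ G.Reachable x₃ c := by
        by_cases hh : G.Reachable x₃ a
        · exact Or.inl hh
        · exact Or.inr (h x₃ hh)
      rcases g1 with g1 | g1 <;> rcases g2 with g2 | g2 <;> rcases g3 with g3 | g3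
      all_goals first
        | exact hr12 (g1.trans g2.symm)
        | exact hr13 (g1.trans g3.symm)
        | exact hr23 (g2.trans g3.symm)
    have hvb : ¬ G.Reachable v b := fun h => hva (h.trans eab.reachable.symm)
    have hvd : ¬ G.Reachable v d := fun h => hvc (h.trans ecd.reachable.symm)
    have nadj : ∀ {u w : V}, ¬ G.Reachable u w → ¬ G.Adj u w := fun h ha => h ha.reachable
    have nadj' : ∀ {u w : V}, ¬ G.Reachable u w → ¬ G.Adj w u :=
      fun h ha => h ha.symm.reachable
    have hne : ∀ {u w : V}, ¬ G.Reachable u w → u ≠ w := fun h he => h (he ▸ Reachable.refl _)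
    set t : Set V := {a, b, c, d, v} with ht_def
    have hat : a ∈ t := by simp [ht_def]
    have hbt : b ∈ t := by simp [ht_def]
    have hct : c ∈ t := by simp [ht_def]
    have hdt : d ∈ t := by simp [ht_def]
    have hvt : v ∈ t := by simp [ht_def]
    by_cases ht : t = Set.univ
    · -- G is K1 + 2K2
      refine h1 (iso_E1' G a b c d v ?_ (hne hrac) (hne hrad) (hne hrbc) (hne hrbd)
        (Ne.symm (hne hva)) (Ne.symm (hne hvb)) (Ne.symm (hne hvc)) (Ne.symm (hne hvd))
        eab ecd (nadj hrac) (nadj hrad) (nadj hrbc) (nadj hrbd)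
        (nadj' hva) (nadj' hvb) (nadj' hvc) (nadj' hvd))
      intro x
      have : x ∈ t := ht ▸ Set.mem_univ x
      simpa [ht_def] using this
    · obtain ⟨A, hAt, hNA, hclq⟩ := extract_polar' (hG.2 t ht)
      by_cases hvA : v ∈ A
      · have hxA : a ∈ A ∧ b ∈ A ∨ c ∈ A ∧ d ∈ A := by
          by_cases haA : a ∈ A
          · by_cases hbA : b ∈ A
            · exact Or.inl ⟨haA, hbA⟩
            · refine Or.inr ⟨?_, ?_⟩
              · by_contra hcA
                exact nadj hrbc (hclq ⟨hbt, hbA⟩ ⟨hct, hcA⟩ (hne hrbc))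
              · by_contra hdA
                exact nadj hrbd (hclq ⟨hbt, hbA⟩ ⟨hdt, hdA⟩ (hne hrbd))
          · refine Or.inr ⟨?_, ?_⟩
            · by_contra hcA
              exact nadj hrac (hclq ⟨hat, haA⟩ ⟨hct, hcA⟩ (hne hrac))
            · by_contra hdA
              exact nadj hrad (hclq ⟨hat, haA⟩ ⟨hdt, hdA⟩ (hne hrad))
        rcases hxA with ⟨hx, hy⟩ | ⟨hx, hy⟩
        · exact hNA hx hvA hy (nadj' hva) (nadj hvb) eab
        · exact hNA hx hvA hy (nadj' hvc) (nadj hvd) ecd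
      · have hall : ∀ z ∈ t, ¬ G.Reachable v z → z ∈ A := by
          intro z hzt hvz
          by_contra hzA
          exact nadj hvz (hclq ⟨hvt, hvA⟩ ⟨hzt, hzA⟩ (hne hvz))
        exact hNA (hall a hat hva) (hall c hct hvc) (hall b hbt hvb)
          (nadj hrac) (nadj' hrbc) eab
  · -- all edges are in one component
    push_neg at hcase
    obtain ⟨v₁, v₂, hrv, hv1, hv2⟩ :
        ∃ v₁ v₂, ¬ G.Reachable v₁ v₂ ∧ (∀ w, ¬ G.Adj v₁ w) ∧ (∀ w, ¬ G.Adj v₂ w) := by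
      by_cases e1 : ∃ w, G.Adj x₁ w
      · obtain ⟨w₁, hw₁⟩ := e1
        refine ⟨x₂, x₃, hr23, fun w hw => hr12 (hcase x₁ w₁ x₂ w hw₁ hw),
          fun w hw => hr13 (hcase x₁ w₁ x₃ w hw₁ hw)⟩
      · push_neg at e1
        by_cases e2 : ∃ w, G.Adj x₂ w
        · obtain ⟨w₂, hw₂⟩ := e2
          refine ⟨x₁, x₃, hr13, e1, fun w hw => hr23 (hcase x₂ w₂ x₃ w hw₂ hw)⟩
        · push_neg at e2
          exact ⟨x₁, x₂, hr12, e1, e2⟩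
    have hne12 : v₁ ≠ v₂ := fun h => hrv (h ▸ Reachable.refl _)
    -- remove v₂: the rest is (s,1)-polar
    have ht0 : ({v₂}ᶜ : Set V) ≠ Set.univ := by
      intro h
      have : v₂ ∈ ({v₂}ᶜ : Set V) := h ▸ Set.mem_univ v₂
      simp at this
    obtain ⟨A, hAt, hNA, hclq⟩ := extract_polar' (hG.2 _ ht0)
    by_cases hvA : v₁ ∈ A
    · -- A is independent, G is split, contradiction
      have hAind : _root_.IsIndepSet G A := by
        intro u w hu hw huv
        exact hNA hu hvA hw (fun h => hv1 u h.symm) (hv1 w) huv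
      refine hsplit (A ∪ {v₂}) ?_ ?_
      · rintro u w (hu | hu) hw huw
        · rcases hw with hw | hw
          · exact hAind hu hw huw
          · rw [Set.mem_singleton_iff] at hw; subst hw; exact hv2 u huw.symm
        · rw [Set.mem_singleton_iff] at hu
          subst hu
          exact hv2 w huw
      · have : (A ∪ {v₂})ᶜ = {v₂}ᶜ \ A := by
          ext x
          simp only [Set.mem_compl_iff, Set.mem_union, Set.mem_singleton_iff, Set.mem_diff]
          tauto
        rw [this]
        exact hclq
    · -- A = {v₁, v₂}ᶜ is complete multipartite
      have hW : ∀ x, x ≠ v₁ → x ≠ v₂ → x ∈ A := by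
        intro x hx1 hx2
        by_contra hxA
        have hv1t : v₁ ∈ ({v₂}ᶜ : Set V) \ A := ⟨by simpa using hne12, hvA⟩
        exact hv1 x (hclq hv1t ⟨by simpa using hx2, hxA⟩ (Ne.symm hx1))
      -- {v₁,v₂} is independent; complement not a clique
      have hnc1 := hsplit {v₁, v₂} (by
        rintro u w (rfl | hu) hw huw
        · exact hv1 w huw
        · rw [Set.mem_singleton_iff] at hu
          subst hu
          exact hv2 w huw)
      rw [SimpleGraph.isClique_iff, Set.Pairwise] at hnc1
      push_neg at hnc1
      obtain ⟨a, hamem, b, hbmem, hab, nab⟩ := hnc1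
      simp only [Set.mem_compl_iff, Set.mem_insert_iff, Set.mem_singleton_iff, not_or] at hamem hbmem
      have haA : a ∈ A := hW a hamem.1 hamem.2
      have hbA : b ∈ A := hW b hbmem.1 hbmem.2
      -- the nonadjacency class of a, together with v₁, v₂
      have hnc2 := hsplit ({x ∈ A | ¬ G.Adj x a} ∪ {v₁, v₂}) (by
        rintro u w hu hw huw
        rcases hu with hu | hu
        · rcases hw with hw | hw
          · exact hNA hu.1 haA hw.1 hu.2 (fun h => hw.2 h.symm) huw
          · rcases hw with rfl | hw
            · exact hv1 u huw.symm
            · rw [Set.mem_singleton_iff] at hw; subst hw; exact hv2 u huw.symm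
        · rcases hu with rfl | hu
          · exact hv1 w huw
          · rw [Set.mem_singleton_iff] at hu; subst hu; exact hv2 w huw)
      rw [SimpleGraph.isClique_iff, Set.Pairwise] at hnc2
      push_neg at hnc2
      obtain ⟨c, hcmem, d, hdmem, hcd, ncd⟩ := hnc2
      simp only [Set.mem_compl_iff, Set.mem_union, Set.mem_setOf_eq, Set.mem_insert_iff,
        Set.mem_singleton_iff, not_or, not_and, not_not] at hcmem hdmem
      obtain ⟨hc', hcv1, hcv2⟩ := hcmem
      obtain ⟨hd', hdv1, hdv2⟩ := hdmem
      have hcA : c ∈ A := hW c hcv1 hcv2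
      have hdA : d ∈ A := hW d hdv1 hdv2
      have eca : G.Adj c a := hc' hcA
      have eda : G.Adj d a := hd' hdA
      have eac : G.Adj a c := eca.symm
      have ead : G.Adj a d := eda.symm
      have nba : ¬ G.Adj b a := fun h => nab h.symm
      have ebc : G.Adj b c := by
        by_contra hcon
        exact hNA hcA hbA haA (fun h => hcon h.symm) nba eca
      have ebd : G.Adj b d := by
        by_contra hcon
        exact hNA hdA hbA haA (fun h => hcon h.symm) nba eda
      -- now {a,b,c,d} induce a C4 and v₁, v₂ are isolated
      have hane : a ≠ v₁ := hamem.1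
      have hbne : b ≠ v₁ := hbmem.1
      set t : Set V := {a, b, c, d, v₁, v₂} with ht_def
      have hat : a ∈ t := by simp [ht_def]
      have hbt : b ∈ t := by simp [ht_def]
      have hct : c ∈ t := by simp [ht_def]
      have hdt : d ∈ t := by simp [ht_def]
      have hv1t : v₁ ∈ t := by simp [ht_def]
      have hv2t : v₂ ∈ t := by simp [ht_def]
      by_cases ht : t = Set.univ
      · refine h2 (iso_E3' G a b c d v₁ v₂ ?_ hab hcd hne12
          hamem.1 hbmem.1 hcv1 hdv1 hamem.2 hbmem.2 hcv2 hdv2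
          eac ead ebc ebd nab ncd hv1 hv2)
        intro x
        have : x ∈ t := ht ▸ Set.mem_univ x
        simpa [ht_def] using this
      · obtain ⟨B, hBt, hNB, hclqB⟩ := extract_polar' (hG.2 t ht)
        by_cases h1B : v₁ ∈ B
        · have hx : a ∈ B ∨ b ∈ B := by
            by_contra hcon
            push_neg at hcon
            exact nab (hclqB ⟨hat, hcon.1⟩ ⟨hbt, hcon.2⟩ hab)
          have hy : c ∈ B ∨ d ∈ B := by
            by_contra hcon
            push_neg at hcon
            exact ncd (hclqB ⟨hct, hcon.1⟩ ⟨hdt, hcon.2⟩ hcd)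
          rcases hx with hx | hx <;> rcases hy with hy | hy
          · exact hNB hx h1B hy (fun h => hv1 a h.symm) (hv1 c) eac
          · exact hNB hx h1B hy (fun h => hv1 a h.symm) (hv1 d) ead
          · exact hNB hx h1B hy (fun h => hv1 b h.symm) (hv1 c) ebc
          · exact hNB hx h1B hy (fun h => hv1 b h.symm) (hv1 d) ebd
        · have hall : ∀ z ∈ t, z ≠ v₁ → z ∈ B := by
            intro z hzt hz1
            by_contra hzB
            exact hv1 z (hclqB ⟨hv1t, h1B⟩ ⟨hzt, hzB⟩ (Ne.symm hz1))
          exact hNB (hall a hat hane) (hall v₂ hv2t (Ne.symm hne12)) (hall c hct hcv1)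
            (fun h => hv2 a h.symm) (hv2 c) eac
end

section
/- Let s ≥ 2 be an integer and let H be a connected finite simple graph. If the disjoint union G = K_2 + H is a minimal (s,1)-polar obstruction and G is not isomorphic to 2K_{s+1}, then H is isomorphic to the join 2K_1 ⊕ K_s. -/
open SimpleGraph

universe u v

section Stmt8Aux

variable {W : Type u} {s : ℕ} {H : SimpleGraph W}

private lemma stmt8_P1 (hs : 2 ≤ s) (h : ∃ f : W → Fin s, ∀ u w, H.Adj u w ↔ f u ≠ f w) :
    SOnePolar s (KG 2 ⊕g H) := by
  obtain ⟨f, hf⟩ := h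
  refine ⟨Set.range Sum.inr,
    ⟨fun u => Sum.elim (fun _ => (⟨0, by omega⟩ : Fin s)) f u.1, ?_⟩, ?_⟩
  · rintro ⟨uv, u', rfl⟩ ⟨wv, w', rfl⟩
    simpa using hf u' w'
  · intro u hu w hw hne
    rcases u with i | a
    · rcases w with j | b
      · have hij : i ≠ j := fun h => hne (by rw [h])
        simp [KG, hij]
      · exact absurd (Set.mem_range_self b) hw
    · exact absurd (Set.mem_range_self a) hu

private lemma stmt8_P2 (hs : 2 ≤ s) (h : ∀ u w : W, u ≠ w → H.Adj u w) :
    SOnePolar s (KG 2 ⊕g H) := by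
  refine ⟨Set.range Sum.inl,
    ⟨fun u => Sum.elim (fun i => Fin.castLE hs i) (fun _ => (⟨0, by omega⟩ : Fin s)) u.1,
      ?_⟩, ?_⟩
  · rintro ⟨uv, u', rfl⟩ ⟨wv, w', rfl⟩
    simp [KG, Fin.ext_iff]
  · intro u hu w hw hne
    rcases u with i | a
    · exact absurd (Set.mem_range_self i) hu
    · rcases w with j | b
      · exact absurd (Set.mem_range_self j) hw
      · have hab : a ≠ b := fun h => hne (by rw [h])
        simpa using h a b hab

private lemma stmt8_N1 (hs : 2 ≤ s) (z : W)
    (hp : SOnePolar s ((KG 2 ⊕g H).induce {(Sum.inr z : Fin 2 ⊕ W)}ᶜ)) :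
    (∃ f : W → Fin s, ∀ u w, u ≠ z → w ≠ z → (H.Adj u w ↔ f u ≠ f w)) ∨
    (∀ u w, u ≠ z → w ≠ z → u ≠ w → H.Adj u w) ∨
    (∀ u w, u ≠ z → w ≠ z → ¬ H.Adj u w) := by
  classical
  obtain ⟨A, ⟨f, hf⟩, hK⟩ := hp
  have hmeml : ∀ i : Fin 2, (Sum.inl i : Fin 2 ⊕ W) ∈ ({(Sum.inr z : Fin 2 ⊕ W)}ᶜ : Set _) := by
    simp
  have hmemr : ∀ u : W, u ≠ z →
      (Sum.inr u : Fin 2 ⊕ W) ∈ ({(Sum.inr z : Fin 2 ⊕ W)}ᶜ : Set _) := by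
    intro u hu; simp [hu]
  have asym : ∀ (i j : Fin 2), ((⟨Sum.inl i, hmeml i⟩ :
        ↥({(Sum.inr z : Fin 2 ⊕ W)}ᶜ : Set _)) ∈ A) →
      ((⟨Sum.inl j, hmeml j⟩ : ↥({(Sum.inr z : Fin 2 ⊕ W)}ᶜ : Set _)) ∉ A) →
      (∀ u w, u ≠ z → w ≠ z → ¬ H.Adj u w) := by
    intro i j hpA hqA u w hu hw hadj
    have hinr : ∀ v : W, (hv : v ≠ z) → (⟨Sum.inr v, hmemr v hv⟩ :
        ↥({(Sum.inr z : Fin 2 ⊕ W)}ᶜ : Set _)) ∈ A := by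
      intro v hv
      by_contra hvA
      have := hK hqA hvA (by simp)
      simpa using this
    have key : ∀ v : W, (hv : v ≠ z) → f ⟨_, hinr v hv⟩ = f ⟨_, hpA⟩ := by
      intro v hv
      exact not_ne_iff.mp (mt (hf _ _).mpr (by simp))
    exact (hf ⟨_, hinr u hu⟩ ⟨_, hinr w hw⟩).mp (by simpa using hadj)
      ((key u hu).trans (key w hw).symm)
  by_cases hA : (⟨Sum.inl 0, hmeml 0⟩ : ↥({(Sum.inr z : Fin 2 ⊕ W)}ᶜ : Set _)) ∈ A <;>
    by_cases hB : (⟨Sum.inl 1, hmeml 1⟩ : ↥({(Sum.inr z : Fin 2 ⊕ W)}ᶜ : Set _)) ∈ A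
  · -- both in A : clique case
    right; left
    intro u w hu hw huw
    have habf : f ⟨_, hA⟩ ≠ f ⟨_, hB⟩ := by
      refine (hf _ _).mp ?_
      show ((KG 2 ⊕g H).induce _).Adj _ _
      simp [KG]
    have hninr : ∀ v : W, (hv : v ≠ z) → (⟨Sum.inr v, hmemr v hv⟩ :
        ↥({(Sum.inr z : Fin 2 ⊕ W)}ᶜ : Set _)) ∉ A := by
      intro v hv hvA
      have h1 : f ⟨_, hvA⟩ = f ⟨_, hA⟩ := not_ne_iff.mp (mt (hf _ _).mpr (by simp))
      have h2 : f ⟨_, hvA⟩ = f ⟨_, hB⟩ := not_ne_iff.mp (mt (hf _ _).mpr (by simp))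
      exact habf (h1.symm.trans h2)
    have := hK (hninr u hu) (hninr w hw)
      (by simp [Subtype.ext_iff]; exact huw)
    simpa using this
  · right; right; exact asym 0 1 hA hB
  · right; right; exact asym 1 0 hB hA
  · -- both outside A
    left
    have hinr : ∀ v : W, (hv : v ≠ z) → (⟨Sum.inr v, hmemr v hv⟩ :
        ↥({(Sum.inr z : Fin 2 ⊕ W)}ᶜ : Set _)) ∈ A := by
      intro v hv
      by_contra hvA
      have := hK hA hvA (by simp)
      simpa using this
    refine ⟨fun v => if hv : v ≠ z then f ⟨_, hinr v hv⟩ else ⟨0, by omega⟩,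
      fun u w hu hw => ?_⟩
    beta_reduce
    rw [dif_pos hu, dif_pos hw]
    simpa using hf ⟨_, hinr u hu⟩ ⟨_, hinr w hw⟩

end Stmt8Aux

/-- For `s ≥ 2` and `H` connected, if `G = K_2 + H` is a minimal `(s,1)`-polar
obstruction not isomorphic to `2K_{s+1}`, then `H ≅ 2K_1 ⊕ K_s`. -/
theorem stmt_8 {W : Type*} [Fintype W] (s : ℕ) (hs : 2 ≤ s) (H : SimpleGraph W)
    (hH : H.Connected)
    (hobs : MinSOnePolarObstruction s (KG 2 ⊕g H))
    (hne : ¬ Nonempty ((KG 2 ⊕g H) ≃g (KG (s + 1) ⊕g KG (s + 1)))) :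
    Nonempty (H ≃g joinG (EG 2) (KG s)) := by
  classical
  obtain ⟨hnp, hind⟩ := hobs
  have h1 : ¬ ∃ f : W → Fin s, ∀ u w, H.Adj u w ↔ f u ≠ f w := fun h => hnp (stmt8_P1 hs h)
  have h2 : ∃ x y : W, x ≠ y ∧ ¬ H.Adj x y := by
    by_contra hcl
    push_neg at hcl
    exact hnp (stmt8_P2 hs hcl)
  obtain ⟨x, y, hxy, hnadj⟩ := h2
  have hmin : ∀ z : W,
      (∃ f : W → Fin s, ∀ u w, u ≠ z → w ≠ z → (H.Adj u w ↔ f u ≠ f w)) ∨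
      (∀ u w, u ≠ z → w ≠ z → u ≠ w → H.Adj u w) ∨
      (∀ u w, u ≠ z → w ≠ z → ¬ H.Adj u w) := by
    intro z
    refine stmt8_N1 hs z (hind _ ?_)
    intro hcontra
    have : (Sum.inr z : Fin 2 ⊕ W) ∈ ({(Sum.inr z : Fin 2 ⊕ W)}ᶜ : Set (Fin 2 ⊕ W)) := by
      rw [hcontra]; trivial
    simp at this
  have hiso : ∀ v u : W, v ≠ u → (∀ t1 : W, ¬ H.Adj v t1) → False := by
    intro v u hvu hv
    obtain ⟨p⟩ := hH.preconnected v u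
    cases p with
    | nil => exact hvu rfl
    | cons h _ => exact hv _ h
  have htrans : ∀ u v w : W, u ≠ w → ¬ H.Adj u v → ¬ H.Adj v w → ¬ H.Adj u w := by
    intro u v w huw h1' h2' hadj
    rcases eq_or_ne v u with rfl | hvu
    · exact h2' hadj
    rcases eq_or_ne v w with rfl | hvw
    · exact h1' hadj
    by_cases hz : ∃ z : W, z ≠ u ∧ z ≠ v ∧ z ≠ w
    · obtain ⟨z, hz1, hz2, hz3⟩ := hz
      rcases hmin z with ⟨f, hf⟩ | hc | hc
      · have e1 := (hf u w (Ne.symm hz1) (Ne.symm hz3)).mp hadj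
        have e2 := not_ne_iff.mp (mt (hf u v (Ne.symm hz1) (Ne.symm hz2)).mpr h1')
        have e3 := not_ne_iff.mp (mt (hf v w (Ne.symm hz2) (Ne.symm hz3)).mpr h2')
        exact e1 (e2.trans e3)
      · exact h1' (hc u v (Ne.symm hz1) (Ne.symm hz2) hvu.symm)
      · exact hc u w (Ne.symm hz1) (Ne.symm hz3) hadj
    · push_neg at hz
      apply hiso v u hvu
      intro t1
      by_cases h' : t1 = u
      · rw [h']; exact fun h => h1' h.symm
      by_cases h'' : t1 = v
      · rw [h'']; exact H.loopless.irrefl v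
      · rw [hz t1 h' h'']; exact h2'
  -- every pair avoiding x is adjacent
  have hclq : ∀ u w : W, u ≠ x → w ≠ x → u ≠ w → H.Adj u w := by
    rcases hmin x with ⟨f, hf⟩ | hc | hc
    · exfalso
      apply h1
      have hxw : ∀ w : W, w ≠ x → w ≠ y → (H.Adj x w ↔ H.Adj y w) := by
        intro w hwx hwy
        constructor
        · intro h
          by_contra hyw
          exact htrans w y x hwx (fun hh => hyw hh.symm) (fun hh => hnadj hh.symm) h.symm
        · intro h
          by_contra hxw'
          exact htrans w x y hwy (fun hh => hxw' hh.symm) hnadj h.symm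
      refine ⟨fun v => if v = x then f y else f v, fun u w => ?_⟩
      beta_reduce
      by_cases hux : u = x <;> by_cases hwx : w = x
      · rw [if_pos hux, if_pos hwx, hux, hwx]
        simp
      · rw [if_pos hux, if_neg hwx, hux]
        by_cases hwy : w = y
        · rw [hwy]; simp [hnadj]
        · rw [hxw w hwx hwy, hf y w (Ne.symm hxy) hwx]
      · rw [if_neg hux, if_pos hwx, hwx]
        by_cases huy : u = y
        · rw [huy]
          constructor
          · intro h; exact absurd h.symm hnadj
          · intro h; exact absurd rfl h
        · rw [H.adj_comm u x, hxw u hux huy, H.adj_comm y u, hf u y hux (Ne.symm hxy)]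
      · rw [if_neg hux, if_neg hwx]
        exact hf u w hux hwx
    · exact hc
    · exfalso
      apply hiso x y hxy
      intro t1
      by_cases h' : t1 = x
      · rw [h']; exact H.loopless.irrefl x
      by_cases h'' : t1 = y
      · rw [h'']; exact hnadj
      · intro hadj'
        exact htrans x y t1 (Ne.symm h') hnadj (hc y t1 (Ne.symm hxy) h') hadj'
  -- all pairs other than {x,y} adjacent
  have hadj : ∀ u w : W, u ≠ w → ¬(u = x ∧ w = y) → ¬(u = y ∧ w = x) → H.Adj u w := by
    intro u w huw hp1 hp2
    by_cases hux : u = x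
    · rw [hux]
      have hwy : w ≠ y := fun h => hp1 ⟨hux, h⟩
      have hwx3 : w ≠ x := fun h => huw (hux.trans h.symm)
      by_contra hnxw
      have hny : ¬ H.Adj w y := htrans w x y hwy (fun h => hnxw h.symm) hnadj
      exact hny (hclq w y hwx3 (Ne.symm hxy) hwy)
    · by_cases hwx2 : w = x
      · rw [hwx2]
        have huy : u ≠ y := fun h => hp2 ⟨h, hwx2⟩
        by_contra hnux
        have hny : ¬ H.Adj u y := htrans u x y huy hnux hnadj
        exact hny (hclq u y hux (Ne.symm hxy) huy)
      · exact hclq u w hux hwx2 huw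
  set T : Finset W := ({x, y} : Finset W)ᶜ with hT
  have hTmem : ∀ v : W, v ∈ T ↔ (v ≠ x ∧ v ≠ y) := by
    intro v; simp [hT, not_or]
  have hge : s ≤ T.card := by
    by_contra hlt
    push_neg at hlt
    apply h1
    refine ⟨fun v => if hv : v ∈ T then
      ⟨(T.equivFin ⟨v, hv⟩).1 + 1, by have hl := (T.equivFin ⟨v, hv⟩).isLt; omega⟩
      else ⟨0, by omega⟩, fun u w => ?_⟩
    beta_reduce
    by_cases hu : u ∈ T <;> by_cases hw : w ∈ T
    · rw [dif_pos hu, dif_pos hw]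
      constructor
      · intro h hfe
        have hval := congrArg Fin.val hfe
        simp only [add_left_inj] at hval
        exact h.ne (congrArg Subtype.val (T.equivFin.injective (Fin.ext hval)))
      · intro hne2
        refine hadj u w ?_ (fun h => ((hTmem u).mp hu).1 h.1) (fun h => ((hTmem u).mp hu).2 h.1)
        rintro rfl; exact hne2 rfl
    · rw [dif_pos hu, dif_neg hw]
      constructor
      · intro _ hfe
        have hval := congrArg Fin.val hfe
        simp at hval
      · intro _
        refine hadj u w ?_ (fun h => ((hTmem u).mp hu).1 h.1) (fun h => ((hTmem u).mp hu).2 h.1)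
        rintro rfl; exact hw hu
    · rw [dif_neg hu, dif_pos hw]
      constructor
      · intro _ hfe
        have hval := congrArg Fin.val hfe
        simp at hval
      · intro _
        refine hadj u w ?_ (fun h => ((hTmem w).mp hw).2 h.2) (fun h => ((hTmem w).mp hw).1 h.2)
        rintro rfl; exact hu hw
    · rw [dif_neg hu, dif_neg hw]
      have hu' : u = x ∨ u = y := by
        by_contra hcc
        push_neg at hcc
        exact hu ((hTmem u).mpr hcc)
      have hw' : w = x ∨ w = y := by
        by_contra hcc
        push_neg at hcc
        exact hw ((hTmem w).mpr hcc)
      constructor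
      · intro h
        exfalso
        rcases hu' with rfl | rfl <;> rcases hw' with rfl | rfl
        exacts [h.ne rfl, hnadj h, hnadj h.symm, h.ne rfl]
      · intro h; exact absurd rfl h
  have h2T : 1 < T.card := by omega
  obtain ⟨z, hz, z', hz', hzz'⟩ := Finset.one_lt_card.mp h2T
  have hzT := (hTmem z).mp hz
  have hz'T := (hTmem z').mp hz'
  have hle : T.card ≤ s := by
    rcases hmin z with ⟨f, hf⟩ | hc | hc
    · have hxS : x ∉ T.erase z := fun h => ((hTmem x).mp (Finset.mem_of_mem_erase h)).1 rfl
      have hzc : 1 ≤ T.card := by omega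
      have hScard : (insert x (T.erase z)).card = T.card := by
        rw [Finset.card_insert_of_notMem hxS, Finset.card_erase_of_mem hz]
        omega
      have hinj : Set.InjOn f ↑(insert x (T.erase z)) := by
        intro a ha b hb hfab
        by_contra hne2
        have hmemS : ∀ c : W, c ∈ insert x (T.erase z) → c ≠ z ∧ c ≠ y := by
          intro c hc2
          rcases Finset.mem_insert.mp hc2 with rfl | hc3
          · exact ⟨fun h => hzT.1 h.symm, hxy⟩
          · have h4 := Finset.mem_erase.mp hc3
            exact ⟨h4.1, ((hTmem c).mp h4.2).2⟩
        have ha' := hmemS a (by exact_mod_cast ha)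
        have hb' := hmemS b (by exact_mod_cast hb)
        have hab : H.Adj a b := hadj a b hne2 (fun h => hb'.2 h.2) (fun h => ha'.2 h.1)
        exact (hf a b ha'.1 hb'.1).mp hab hfab
      have hcard := Finset.card_le_card_of_injOn f (fun a _ => Finset.mem_univ (f a)) hinj
      simpa [hScard, Finset.card_univ] using hcard
    · exact absurd (hc x y (Ne.symm hzT.1) (Ne.symm hzT.2) hxy) hnadj
    · exfalso
      have hadjyz : H.Adj y z' := hadj y z' (fun h => hz'T.2 h.symm)
        (fun h => hxy h.1.symm) (fun h => hz'T.1 h.2)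
      exact hc y z' (Ne.symm hzT.2) (Ne.symm hzz') hadjyz
  have hTcard : T.card = s := le_antisymm hle hge
  -- build the isomorphism
  let e1 : {v // v ∈ T} ≃ Fin s := T.equivFin.trans (finCongr hTcard)
  let g : Fin 2 ⊕ Fin s → W :=
    Sum.elim (fun i => if i = 0 then x else y) (fun j => (e1.symm j : W))
  have hgl : ∀ i : Fin 2, g (Sum.inl i) = if i = 0 then x else y := fun _ => rfl
  have hgr : ∀ j : Fin s, g (Sum.inr j) = (e1.symm j : W) := fun _ => rfl
  have hmemT : ∀ j : Fin s, ((e1.symm j : W) ≠ x ∧ (e1.symm j : W) ≠ y) :=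
    fun j => (hTmem _).mp (e1.symm j).2
  have hginj : Function.Injective g := by
    intro p q hpq
    rcases p with i | j <;> rcases q with i' | j'
    · rw [hgl, hgl] at hpq
      by_cases h0 : i = 0 <;> by_cases h0' : i' = 0
      · rw [h0, h0']
      · rw [if_pos h0, if_neg h0'] at hpq; exact absurd hpq hxy
      · rw [if_neg h0, if_pos h0'] at hpq; exact absurd hpq.symm hxy
      · have hi : i = 1 := by omega
        have hi' : i' = 1 := by omega
        rw [hi, hi']
    · rw [hgl, hgr] at hpq
      exfalso
      by_cases h0 : i = 0
      · rw [if_pos h0] at hpq; exact (hmemT j').1 hpq.symm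
      · rw [if_neg h0] at hpq; exact (hmemT j').2 hpq.symm
    · rw [hgr, hgl] at hpq
      exfalso
      by_cases h0 : i' = 0
      · rw [if_pos h0] at hpq; exact (hmemT j).1 hpq
      · rw [if_neg h0] at hpq; exact (hmemT j).2 hpq
    · rw [hgr, hgr] at hpq
      exact congrArg Sum.inr (e1.symm.injective (Subtype.ext hpq))
  have hgsurj : Function.Surjective g := by
    intro v
    by_cases hvx : v = x
    · exact ⟨Sum.inl 0, by rw [hgl]; simp [hvx]⟩
    by_cases hvy : v = y
    · exact ⟨Sum.inl 1, by rw [hgl]; simp [hvy]⟩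
    · have hvT : v ∈ T := (hTmem v).mpr ⟨hvx, hvy⟩
      exact ⟨Sum.inr (e1 ⟨v, hvT⟩), by rw [hgr]; simp⟩
  have hadjT : ∀ u : W, (u = x ∨ u = y) → ∀ v : W, v ∈ T → H.Adj u v := by
    intro u hu v hv
    rw [hTmem] at hv
    refine hadj u v ?_ (fun h => hv.2 h.2) (fun h => hv.1 h.2)
    rintro rfl
    rcases hu with rfl | rfl
    exacts [hv.1 rfl, hv.2 rfl]
  have hiso2 : joinG (EG 2) (KG s) ≃g H := by
    refine ⟨Equiv.ofBijective g ⟨hginj, hgsurj⟩, @fun p q => ?_⟩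
    show H.Adj (g p) (g q) ↔ (joinG (EG 2) (KG s)).Adj p q
    rcases p with i | j <;> rcases q with i' | j'
    · rw [hgl, hgl]
      have hrhs : ¬ (joinG (EG 2) (KG s)).Adj (Sum.inl i) (Sum.inl i') := by
        simp [joinG, EG]
      refine iff_of_false ?_ hrhs
      by_cases h0 : i = 0 <;> by_cases h0' : i' = 0
      · rw [if_pos h0, if_pos h0']; exact H.loopless.irrefl x
      · rw [if_pos h0, if_neg h0']; exact hnadj
      · rw [if_neg h0, if_pos h0']; exact fun h => hnadj (H.symm.symm _ _ h)
      · rw [if_neg h0, if_neg h0']; exact H.loopless.irrefl y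
    · rw [hgl, hgr]
      have hrhs : (joinG (EG 2) (KG s)).Adj (Sum.inl i) (Sum.inr j') := by
        simp [joinG]
      refine iff_of_true ?_ hrhs
      refine hadjT _ ?_ _ (e1.symm j').2
      by_cases h0 : i = 0
      · rw [if_pos h0]; exact Or.inl rfl
      · rw [if_neg h0]; exact Or.inr rfl
    · rw [hgr, hgl]
      have hrhs : (joinG (EG 2) (KG s)).Adj (Sum.inr j) (Sum.inl i') := by
        simp [joinG]
      refine iff_of_true ?_ hrhs
      refine H.symm.symm _ _ (hadjT _ ?_ _ (e1.symm j).2)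
      by_cases h0 : i' = 0
      · rw [if_pos h0]; exact Or.inl rfl
      · rw [if_neg h0]; exact Or.inr rfl
    · rw [hgr, hgr]
      have hrhs : (joinG (EG 2) (KG s)).Adj (Sum.inr j) (Sum.inr j') ↔ j ≠ j' := by
        simp [joinG, KG]
      rw [hrhs]
      constructor
      · intro h hj
        exact h.ne (by rw [hj])
      · intro hj
        refine hadj _ _ (fun h => hj (e1.symm.injective (Subtype.ext h)))
          (fun h => (hmemT j').2 h.2) (fun h => (hmemT j).2 h.1)
  exact ⟨hiso2.symm⟩
end
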